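/- arXiv:math-ph/0408022 — 3 statements merged into one kernel-verified Lean document; each statement's English description precedes it below -/
import Mathlib

section
/- For each tempered distribution a ∈ S'(ℝ^n), the formulas (a(𝐩)δ_±(p²−m²), f) = (a, 𝐩 ↦ f(Ω_±(𝐩))/(2ω(𝐩))) define tempered distributions a(𝐩)δ_±(p²−m²) ∈ S'(ℝ^{1+n}), and the resulting maps S'(ℝ^n) → S'(ℝ^{1+n}), a ↦ a(𝐩)δ_±(p²−m²), are ℂ-linear and sequentially continuous with respect to the weak* topologies. -/
open MeasureTheory Filter Topology
set_option maxHeartbeats 1000000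
set_option synthInstance.maxHeartbeats 400000
noncomputable section

/-- The `i`-th standard unit vector of `ℝ^d`. -/
def unitVec {d : ℕ} (i : Fin d) : Fin d → ℝ := Pi.single i 1

/-- Schwartz space `𝓢(ℝ^d, ℂ)`. -/
abbrev Sch (d : ℕ) : Type := SchwartzMap (Fin d → ℝ) ℂ

/-- Tempered distributions `𝓢'(ℝ^d)` (dual space of `Sch d`). -/
abbrev TDist (d : ℕ) : Type := Sch d →L[ℂ] ℂ

/-- `ω(𝐩) = √(𝐩·𝐩 + m²)`. -/
def omegaFn (m : ℝ) {d : ℕ} (p : Fin d → ℝ) : ℝ :=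
  Real.sqrt ((∑ i, (p i) ^ 2) + m ^ 2)

/-- `Ω_σ(𝐩) = (σ·ω(𝐩), 𝐩) ∈ ℝ^{1+d}` (σ = ±1). -/
def OmegaMap (m σ : ℝ) {d : ℕ} (p : Fin d → ℝ) : Fin (d + 1) → ℝ :=
  Fin.cons (σ * omegaFn m p) p

/-- Partial derivative of a function in the `i`-th coordinate direction. -/
def pdCoord {d : ℕ} (i : Fin d) (f : (Fin d → ℝ) → ℂ) : (Fin d → ℝ) → ℂ :=
  fun x => fderiv ℝ f x (Pi.single i 1)

/-- Multi-index partial derivative `∂^α`. -/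
def pdMulti {d : ℕ} (α : Fin d → ℕ) (f : (Fin d → ℝ) → ℂ) : (Fin d → ℝ) → ℂ :=
  (List.finRange d).foldr (fun i g => (pdCoord i)^[α i] g) f

/-- The `(k,β,α)` squeezed seminorm bound:
`sup_{p⁺ ≠ 0} |(p⁺)^k p_⊥^β ∂^α f(𝐩̃)| ≤ C`, where `p⁺` is coordinate `0` and
`p_⊥` the remaining coordinates. -/
def SqBound {d : ℕ} [NeZero d] (k : ℤ) (β α : Fin d → ℕ)
    (f : (Fin d → ℝ) → ℂ) (C : ℝ) : Prop :=
  ∀ x : Fin d → ℝ, x 0 ≠ 0 →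
    |x 0| ^ k * |∏ j ∈ Finset.univ.erase (0 : Fin d), (x j) ^ (β j)| * ‖pdMulti α f x‖ ≤ C

/-- Membership in the squeezed Schwartz space `S_{p⁺}(ℝ^d)`. -/
def IsSqueezed {d : ℕ} [NeZero d] (f : (Fin d → ℝ) → ℂ) : Prop :=
  ContDiff ℝ (⊤ : ℕ∞) f ∧ ∀ (k : ℤ) (β α : Fin d → ℕ), ∃ C : ℝ, SqBound k β α f C

/-- Membership in `S_{p⁺>0}(ℝ^d)` (σ = 1) resp. `S_{p⁺<0}(ℝ^d)` (σ = -1):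
squeezed functions vanishing on `{σ·p⁺ < 0}`. -/
def IsSqueezedSgn {d : ℕ} [NeZero d] (σ : ℝ) (f : (Fin d → ℝ) → ℂ) : Prop :=
  IsSqueezed f ∧ ∀ x : Fin d → ℝ, σ * x 0 < 0 → f x = 0

/-- `T` is the map `a ↦ a(𝐩)δ_σ(p²−m²)`, i.e. for every `a` and every test function `f`,
`(T a)(f) = (a, 𝐩 ↦ f(Ω_σ(𝐩))/(2ω(𝐩)))`. -/
def DeltaPM {d : ℕ} (m σ : ℝ) (T : TDist d → TDist (d + 1)) : Prop :=
  ∀ (a : TDist d) (f : Sch (d + 1)), ∃ g : Sch d,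
    (∀ p, g p = f (OmegaMap m σ p) / (2 * ((omegaFn m p : ℝ) : ℂ))) ∧ T a f = a g

/-- The Klein-Gordon division polynomial `(p⁰)² − 𝐩·𝐩 − m²`. -/
def KGdivPoly (m : ℝ) {n : ℕ} (p : Fin (n + 1) → ℝ) : ℝ :=
  (p 0) ^ 2 - (∑ i : Fin n, (p i.succ) ^ 2) - m ^ 2

/-- The light-cone division polynomial `2p⁺p⁻ − p_⊥·p_⊥ − m²`
(`p⁺` = coordinate 0, `p⁻` = last coordinate). -/
def LCdivPoly (m : ℝ) {n : ℕ} (p : Fin (n + 2) → ℝ) : ℝ :=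
  2 * p 0 * p (Fin.last (n + 1)) - (∑ i : Fin n, (p i.succ.castSucc) ^ 2) - m ^ 2

/-- Minkowski Fourier transform `(F_M f)(p) = ∫ f(x) e^{i(x⁰p⁰ − 𝐱·𝐩)} dx`. -/
def fourierMink {n : ℕ} (f : (Fin (n + 1) → ℝ) → ℂ) (p : Fin (n + 1) → ℝ) : ℂ :=
  ∫ x : Fin (n + 1) → ℝ,
    Complex.exp (Complex.I * ((x 0 * p 0 - ∑ i : Fin n, x i.succ * p i.succ : ℝ) : ℂ)) * f x

/-- Euclidean Fourier transform `(F f)(𝐩) = ∫ f(𝐱) e^{−i𝐱·𝐩} d𝐱`. -/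
def fourierEuc {d : ℕ} (f : (Fin d → ℝ) → ℂ) (p : Fin d → ℝ) : ℂ :=
  ∫ x : Fin d → ℝ, Complex.exp (-(Complex.I * ((∑ i, x i * p i : ℝ) : ℂ))) * f x

/-- Light-cone Fourier transform
`(F_L f)(p̃) = ∫ f(x̃) e^{i(x⁺p⁻ + x⁻p⁺ − x_⊥·p_⊥)} dx̃`
(`x⁺`/`p⁺` = coordinate 0, `x⁻`/`p⁻` = last coordinate). -/
def fourierLC {n : ℕ} (f : (Fin (n + 2) → ℝ) → ℂ) (p : Fin (n + 2) → ℝ) : ℂ :=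
  ∫ x : Fin (n + 2) → ℝ,
    Complex.exp (Complex.I *
      ((x 0 * p (Fin.last (n + 1)) + x (Fin.last (n + 1)) * p 0
        - ∑ i : Fin n, x i.succ.castSucc * p i.succ.castSucc : ℝ) : ℂ)) * f x

/-- Partial light-cone Fourier transform
`(F_L^{𝐱̃→𝐩̃} f)(p⁺,p_⊥) = ∫ f(x_⊥,x⁻) e^{i(x⁻p⁺ − x_⊥·p_⊥)} d𝐱̃`
(position side: `x_⊥` = first `n` coordinates, `x⁻` = last coordinate;
momentum side: `p⁺` = coordinate 0, `p_⊥` = remaining coordinates). -/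
def fourierPartialLC {n : ℕ} (f : (Fin (n + 1) → ℝ) → ℂ) (p : Fin (n + 1) → ℝ) : ℂ :=
  ∫ x : Fin (n + 1) → ℝ,
    Complex.exp (Complex.I *
      ((x (Fin.last n) * p 0 - ∑ i : Fin n, x i.castSucc * p i.succ : ℝ) : ℂ)) * f x

/-- `u ∈ 𝓢'(ℝ^{1+d})` is `C^∞`-dependent on `x⁰` (coordinate 0) as a parameter,
with parameter family `U`. -/
def ParamFamilyC {d : ℕ} (u : TDist (d + 1)) (U : ℝ → TDist d) : Prop :=
  (∀ (f : SchwartzMap ℝ ℂ) (g : Sch d) (h : Sch (d + 1)),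
      (∀ x, h x = f (x 0) * g (Fin.tail x)) →
      u h = ∫ t : ℝ, U t g * f t) ∧
  ∀ g : Sch d, ContDiff ℝ (⊤ : ℕ∞) fun t => U t g

/-- The distributional derivative `∂₀u`, `(∂₀u, f) = −(u, ∂₀f)`. -/
def distDeriv0 {d : ℕ} (u : TDist (d + 1)) : TDist (d + 1) :=
  -(u.comp (LineDeriv.lineDerivOpCLM ℂ (Sch (d + 1)) (unitVec (0 : Fin (d + 1)))))

/-- The Klein-Gordon operator `□ + m² = ∂₀² − Σᵢ∂ᵢ² + m²` on Schwartz space. -/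
def KGop (m : ℝ) {n : ℕ} : Sch (n + 1) →L[ℂ] Sch (n + 1) :=
  (LineDeriv.lineDerivOpCLM ℂ (Sch (n + 1)) (unitVec (0 : Fin (n + 1)))).comp
      (LineDeriv.lineDerivOpCLM ℂ (Sch (n + 1)) (unitVec (0 : Fin (n + 1))))
    - ∑ i : Fin n,
      (LineDeriv.lineDerivOpCLM ℂ (Sch (n + 1)) (unitVec (i.succ : Fin (n + 1)))).comp
        (LineDeriv.lineDerivOpCLM ℂ (Sch (n + 1)) (unitVec (i.succ : Fin (n + 1))))
    + (m ^ 2 : ℂ) • ContinuousLinearMap.id ℂ (Sch (n + 1))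

/-- The LC Klein-Gordon operator `□̃ + m² = 2∂₊∂₋ − Σᵢ∂ᵢ² + m²` on Schwartz space. -/
def LCKGop (m : ℝ) {n : ℕ} : Sch (n + 2) →L[ℂ] Sch (n + 2) :=
  (2 : ℂ) • ((LineDeriv.lineDerivOpCLM ℂ (Sch (n + 2)) (unitVec (0 : Fin (n + 2)))).comp
      (LineDeriv.lineDerivOpCLM ℂ (Sch (n + 2)) (unitVec (Fin.last (n + 1)))))
    - ∑ i : Fin n,
      (LineDeriv.lineDerivOpCLM ℂ (Sch (n + 2)) (unitVec (i.succ.castSucc : Fin (n + 2)))).comp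
        (LineDeriv.lineDerivOpCLM ℂ (Sch (n + 2)) (unitVec (i.succ.castSucc : Fin (n + 2))))
    + (m ^ 2 : ℂ) • ContinuousLinearMap.id ℂ (Sch (n + 2))

/-- The light-cone coordinate change
`κ(x⁰,…,xⁿ) = ((x⁰+xⁿ)/√2, x¹, …, x^{n−1}, (x⁰−xⁿ)/√2)`; it is an involution,
so `κ⁻¹ = κ`. -/
def kappaMap {n : ℕ} (x : Fin (n + 2) → ℝ) : Fin (n + 2) → ℝ :=
  fun j =>
    if j = 0 then (x 0 + x (Fin.last (n + 1))) / Real.sqrt 2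
    else if j = Fin.last (n + 1) then (x 0 - x (Fin.last (n + 1))) / Real.sqrt 2
    else x j

/-- `ω̃(𝐩̃) = (p_⊥·p_⊥ + m²)/(2p⁺)`. -/
def omegaTilde (m : ℝ) {n : ℕ} (pt : Fin (n + 1) → ℝ) : ℝ :=
  ((∑ i : Fin n, (pt i.succ) ^ 2) + m ^ 2) / (2 * pt 0)

/-- `Ω̃(𝐩̃) = (𝐩̃, ω̃(𝐩̃))`. -/
def OmegaTildeMap (m : ℝ) {n : ℕ} (pt : Fin (n + 1) → ℝ) : Fin (n + 2) → ℝ :=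
  Fin.snoc pt (omegaTilde m pt)

/-- The squeezing map `ν_{≷0} = Ω_±⁻¹ ∘ κ⁻¹ ∘ Ω̃_±` (on `{±p⁺ > 0}`); `κ⁻¹ = κ` and
`Ω_±⁻¹` is the projection forgetting the time component. -/
def nuMap (m : ℝ) {n : ℕ} (pt : Fin (n + 1) → ℝ) : Fin (n + 1) → ℝ :=
  Fin.tail (kappaMap (OmegaTildeMap m pt))

/-- `ν*_σ f = j(f ∘ ν_σ)`, the extension by zero of `f ∘ ν_σ` (σ = ±1). -/
def nuStar (m σ : ℝ) {n : ℕ} (f : (Fin (n + 1) → ℝ) → ℂ) : (Fin (n + 1) → ℝ) → ℂ :=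
  fun pt => if 0 < σ * pt 0 then f (nuMap m pt) else 0

/-- Linearity of a functional on the squeezed Schwartz space. -/
def SqLinear {d : ℕ} [NeZero d] (u : Sch d → ℂ) : Prop :=
  (∀ f g : Sch d, IsSqueezed ⇑f → IsSqueezed ⇑g → u (f + g) = u f + u g) ∧
  ∀ (c : ℂ) (f : Sch d), IsSqueezed ⇑f → u (c • f) = c * u f

/-- Continuity of a functional w.r.t. the squeezed seminorm topology. -/
def SqContinuous {d : ℕ} [NeZero d] (u : Sch d → ℂ) : Prop :=
  ∃ (K : Finset ((ℤ × (Fin d → ℕ)) × (Fin d → ℕ))) (C : ℝ),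
    ∀ f : Sch d, IsSqueezed ⇑f → ∀ B : ℝ, 0 ≤ B →
      (∀ idx ∈ K, SqBound idx.1.1 idx.1.2 idx.2 ⇑f B) → ‖u f‖ ≤ C * B

/-- `u` represents an element of `S'_{p⁺}(ℝ^d)`. -/
def IsSqDual {d : ℕ} [NeZero d] (u : Sch d → ℂ) : Prop :=
  SqLinear u ∧ SqContinuous u

/-- `u` represents an element of `S'_{p⁺>0}(ℝ^d)` (σ = 1) resp. `S'_{p⁺<0}(ℝ^d)`
(σ = -1), identified with those elements of `S'_{p⁺}(ℝ^d)` vanishing on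
`S_{p⁺<0}` resp. `S_{p⁺>0}`. -/
def IsSqDualSgn {d : ℕ} [NeZero d] (σ : ℝ) (u : Sch d → ℂ) : Prop :=
  IsSqDual u ∧ ∀ f : Sch d, IsSqueezedSgn (-σ) ⇑f → u f = 0

/-- Continuity of a map of squeezed spaces w.r.t. the squeezed seminorms. -/
def SqContMap {d : ℕ} [NeZero d]
    (T : ((Fin d → ℝ) → ℂ) → ((Fin d → ℝ) → ℂ)) : Prop :=
  ∀ (k : ℤ) (β α : Fin d → ℕ),
    ∃ (K : Finset ((ℤ × (Fin d → ℕ)) × (Fin d → ℕ))) (C : ℝ),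
      ∀ f, IsSqueezed f → ∀ B : ℝ, 0 ≤ B →
        (∀ idx ∈ K, SqBound idx.1.1 idx.1.2 idx.2 f B) →
        SqBound k β α (T f) (C * B)

/-- `Q` is (the function on `{p⁺ ≠ 0}` induced by) an element of the localization
`ℂ[p⁺,p_⊥]_{p⁺}`, i.e. `Q = P/(p⁺)^k` with `P` a polynomial. -/
def IsLaurentLoc {d : ℕ} [NeZero d] (Q : (Fin d → ℝ) → ℂ) : Prop :=
  ∃ (k : ℕ) (P : MvPolynomial (Fin d) ℂ),
    ∀ x : Fin d → ℝ, x 0 ≠ 0 →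
      Q x = MvPolynomial.eval (fun i => ((x i : ℝ) : ℂ)) P / ((x 0 : ℝ) : ℂ) ^ k

/-- `M` is a multiplicator in `S_{p⁺}(ℝ^d)`: for every squeezed `f`, the extension
by zero of `M·f` is again squeezed. -/
def IsMultiplicator {d : ℕ} [NeZero d] (M : (Fin d → ℝ) → ℂ) : Prop :=
  ∀ f, IsSqueezed f → IsSqueezed fun x => if x 0 = 0 then 0 else M x * f x

/-- `f ∈ S_{∂₋}(ℝ^{n+1}) = ⋂_k ∂_{x⁻}^k 𝓢(ℝ^{n+1})`
(`x⁻` = last coordinate). -/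
def IsTame {n : ℕ} (f : Sch (n + 1)) : Prop :=
  ∀ k : ℕ, ∃ h : Sch (n + 1), ∀ x, f x = (pdCoord (Fin.last n))^[k] (⇑h) x

/-- Linearity of a functional on `S_{∂₋}`. -/
def TameLinear {n : ℕ} (u : Sch (n + 1) → ℂ) : Prop :=
  (∀ f g : Sch (n + 1), IsTame f → IsTame g → u (f + g) = u f + u g) ∧
  ∀ (c : ℂ) (f : Sch (n + 1)), IsTame f → u (c • f) = c * u f

/-- Continuity of a functional on `S_{∂₋}` w.r.t. the topology induced from `𝓢`. -/
def TameContinuous {n : ℕ} (u : Sch (n + 1) → ℂ) : Prop :=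
  ∃ (K : Finset (ℕ × ℕ)) (C : ℝ),
    ∀ f : Sch (n + 1), IsTame f →
      ‖u f‖ ≤ C * ((K.sup fun kl => SchwartzMap.seminorm ℝ kl.1 kl.2 :
        Seminorm ℝ (Sch (n + 1))) f)

/-- `u` represents an element of `S'_{∂₋}(ℝ^{n+1})`. -/
def IsTameDual {n : ℕ} (u : Sch (n + 1) → ℂ) : Prop :=
  TameLinear u ∧ TameContinuous u

/-- Characterization of the (unique, sequentially continuous) extension
`ν*_σ : 𝓢'(ℝ^{n+1}) → S'_{p⁺≷0}(ℝ^{n+1})` of `f ↦ j(f ∘ ν_σ)`, where `𝓢` and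
`S_{p⁺≷0}` are embedded into the dual spaces via `f ↦ (g ↦ ∫ f·g)`. -/
def NuStarDualExt {n : ℕ} (m σ : ℝ) (N : TDist (n + 1) → (Sch (n + 1) → ℂ)) : Prop :=
  (∀ a, IsSqDualSgn σ (N a)) ∧
  (∀ (f : Sch (n + 1)) (a : TDist (n + 1)),
      (∀ h : Sch (n + 1), a h = ∫ x, f x * h x) →
      ∀ g : Sch (n + 1), IsSqueezedSgn σ ⇑g →
        N a g = ∫ x, nuStar m σ (⇑f) x * g x) ∧
  (∀ (a : ℕ → TDist (n + 1)) (a₀ : TDist (n + 1)),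
      (∀ h, Tendsto (fun k => a k h) atTop (𝓝 (a₀ h))) →
      ∀ g : Sch (n + 1), IsSqueezedSgn σ ⇑g →
        Tendsto (fun k => N (a k) g) atTop (𝓝 (N a₀ g)))

/-- `u = b(𝐩̃)δ(p̃²−m²)`, i.e. `(u, f) = (b, 𝐩̃ ↦ f(Ω̃(𝐩̃))/(2|p⁺|))`. -/
def DeltaLC {n : ℕ} (m : ℝ) (b : Sch (n + 1) → ℂ) (u : TDist (n + 2)) : Prop :=
  ∀ f : Sch (n + 2), ∃ g : Sch (n + 1),
    (∀ pt, g pt = f (OmegaTildeMap m pt) / (2 * ((|pt 0| : ℝ) : ℂ))) ∧ u f = b g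

/-- `u = b(𝐩̃)δ_σ(p̃²−m²)`, i.e. `(u, f) = (b, 𝐩̃ ↦ Θ(σp⁺)f(Ω̃(𝐩̃))/(2|p⁺|))`. -/
def DeltaLCSgn {n : ℕ} (m σ : ℝ) (b : Sch (n + 1) → ℂ) (u : TDist (n + 2)) : Prop :=
  ∀ f : Sch (n + 2), ∃ g : Sch (n + 1),
    (∀ pt, g pt = if 0 < σ * pt 0 then
        f (OmegaTildeMap m pt) / (2 * ((|pt 0| : ℝ) : ℂ)) else 0) ∧
    u f = b g

/-- A functional on (test functions including) `S_{∂₋}(ℝ^{n+2})` is `C^∞`-dependent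
on `x⁺ ∈ Ω` (coordinate 0) as a parameter, with family `U` in `S'_{∂₋}(ℝ^{n+1})`. -/
def ParamFamilyLCOn {n : ℕ} (Ω : Set ℝ) (u : Sch (n + 2) → ℂ)
    (U : ℝ → (Sch (n + 1) → ℂ)) : Prop :=
  (∀ f : ℝ → ℂ, ContDiff ℝ (⊤ : ℕ∞) f → HasCompactSupport f → tsupport f ⊆ Ω →
      ∀ g : Sch (n + 1), IsTame g →
        ∀ h : Sch (n + 2), (∀ x, h x = f (x 0) * g (Fin.tail x)) →
          u h = ∫ t in Ω, U t g * f t) ∧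
  ∀ g : Sch (n + 1), IsTame g → ContDiffOn ℝ (⊤ : ℕ∞) (fun t => U t g) Ω

/-- `u ∈ 𝓢'(ℝ^{n+2})` admits the tame restriction `u₀` to `{x⁺ = 0}`: its relaxation
is `C^∞`-dependent on `x⁺` in a neighbourhood `Ω` of `0`, with family `U` of tame
generalized functions satisfying `U 0 = u₀`. -/
def AdmitsTameRestriction {n : ℕ} (u : TDist (n + 2)) (u₀ : Sch (n + 1) → ℂ) : Prop :=
  ∃ Ω : Set ℝ, IsOpen Ω ∧ (0 : ℝ) ∈ Ω ∧
    ∃ U : ℝ → (Sch (n + 1) → ℂ), (∀ t ∈ Ω, IsTameDual (U t)) ∧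
      ParamFamilyLCOn Ω (⇑u) U ∧ U 0 = u₀


section Statement0Aux
open Function Set

section TG

variable {E F : Type*} [NormedAddCommGroup E] [NormedSpace ℝ E]
  [NormedAddCommGroup F] [NormedSpace ℝ F]

lemma tg_add {f g : E → F} (hf : f.HasTemperateGrowth) (hg : g.HasTemperateGrowth) :
    Function.HasTemperateGrowth (fun x => f x + g x) := by
  refine ⟨hf.1.add hg.1, fun n => ?_⟩
  obtain ⟨k1, C1, h1⟩ := hf.2 n
  obtain ⟨k2, C2, h2⟩ := hg.2 n
  refine ⟨max k1 k2, |C1| + |C2|, fun x => ?_⟩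
  have hx : (1:ℝ) ≤ 1 + ‖x‖ := by linarith [norm_nonneg x]
  have e : iteratedFDeriv ℝ n (fun x => f x + g x) x
      = iteratedFDeriv ℝ n f x + iteratedFDeriv ℝ n g x := by
    exact iteratedFDeriv_add_apply (hf.1.contDiffAt.of_le (by exact_mod_cast le_top)) (hg.1.contDiffAt.of_le (by exact_mod_cast le_top))
  rw [e]
  calc ‖iteratedFDeriv ℝ n f x + iteratedFDeriv ℝ n g x‖
      ≤ ‖iteratedFDeriv ℝ n f x‖ + ‖iteratedFDeriv ℝ n g x‖ := norm_add_le _ _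
    _ ≤ C1 * (1 + ‖x‖) ^ k1 + C2 * (1 + ‖x‖) ^ k2 := add_le_add (h1 x) (h2 x)
    _ ≤ |C1| * (1 + ‖x‖) ^ (max k1 k2) + |C2| * (1 + ‖x‖) ^ (max k1 k2) := by
        gcongr <;> first
          | exact le_abs_self _
          | exact hx
          | exact le_max_left _ _
          | exact le_max_right _ _
    _ = (|C1| + |C2|) * (1 + ‖x‖) ^ (max k1 k2) := by ring

lemma tg_smul {f : E → ℝ} {g : E → F} (hf : f.HasTemperateGrowth)
    (hg : g.HasTemperateGrowth) :
    Function.HasTemperateGrowth (fun x => f x • g x) := by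
  refine ⟨hf.1.smul hg.1, fun n => ?_⟩
  obtain ⟨k1, C1, hC1, h1⟩ := hf.norm_iteratedFDeriv_le_uniform n
  obtain ⟨k2, C2, hC2, h2⟩ := hg.norm_iteratedFDeriv_le_uniform n
  refine ⟨k1 + k2, 2 ^ n * (C1 * C2), fun x => ?_⟩
  have hx : (1:ℝ) ≤ 1 + ‖x‖ := by linarith [norm_nonneg x]
  have key := norm_iteratedFDeriv_smul_le (𝕜 := ℝ) hf.1 hg.1 x (n := n) (mod_cast le_top)
  refine key.trans ?_
  have : ∀ i ∈ Finset.range (n+1),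
      (n.choose i : ℝ) * ‖iteratedFDeriv ℝ i f x‖ * ‖iteratedFDeriv ℝ (n-i) g x‖
        ≤ (n.choose i : ℝ) * ((C1 * C2) * (1 + ‖x‖) ^ (k1 + k2)) := by
    intro i hi
    rw [Finset.mem_range] at hi
    have b1 := h1 i (by omega) x
    have b2 := h2 (n - i) (by omega) x
    calc (n.choose i : ℝ) * ‖iteratedFDeriv ℝ i f x‖ * ‖iteratedFDeriv ℝ (n-i) g x‖
        ≤ (n.choose i : ℝ) * (C1 * (1 + ‖x‖) ^ k1) * (C2 * (1 + ‖x‖) ^ k2) := by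
          gcongr <;> positivity
      _ = (n.choose i : ℝ) * ((C1 * C2) * (1 + ‖x‖) ^ (k1 + k2)) := by ring
  refine (Finset.sum_le_sum this).trans ?_
  rw [← Finset.sum_mul]
  have hs : (∑ i ∈ Finset.range (n+1), (n.choose i : ℝ)) = 2 ^ n := by
    exact_mod_cast congrArg (Nat.cast : ℕ → ℝ) (Nat.sum_range_choose n)
  rw [hs]; ring_nf; rfl

lemma tg_sum {ι : Type*} (s : Finset ι) (f : ι → E → F)
    (h : ∀ i ∈ s, (f i).HasTemperateGrowth) :
    Function.HasTemperateGrowth (fun x => ∑ i ∈ s, f i x) := by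
  classical
  induction s using Finset.cons_induction with
  | empty => simpa using Function.HasTemperateGrowth.zero
  | cons a s ha ih =>
    simp only [Finset.sum_cons]
    exact tg_add (h a (Finset.mem_cons_self a s))
      (ih fun i hi => h i (Finset.mem_cons_of_mem hi))

lemma tg_ofReal {f : E → ℝ} (hf : f.HasTemperateGrowth) :
    Function.HasTemperateGrowth (fun x => (f x : ℂ)) := by
  refine ⟨Complex.ofRealCLM.contDiff.comp hf.1, fun n => ?_⟩
  obtain ⟨k, C, h⟩ := hf.2 n
  refine ⟨k, C, fun x => ?_⟩
  have : (fun x => ((f x : ℝ) : ℂ)) = (Complex.ofRealLI : ℝ →ₗᵢ[ℝ] ℂ) ∘ f := rfl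
  rw [this, Complex.ofRealLI.norm_iteratedFDeriv_comp_left (x := x) hf.1.contDiffAt (i := n) (by exact_mod_cast le_top)]
  exact h x

end TG

lemma iterDeriv_rpow (r : ℝ) (i : ℕ) :
    ∀ y ∈ Ioi (0:ℝ), iteratedDerivWithin i (fun t : ℝ => t ^ r) (Ioi 0) y
      = (∏ j ∈ Finset.range i, (r - j)) * y ^ (r - i) := by
  induction i with
  | zero =>
    intro y hy
    simp [iteratedDerivWithin_zero]
  | succ i ih =>
    intro y hy
    rw [iteratedDerivWithin_succ]
    rw [derivWithin_of_isOpen isOpen_Ioi hy]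
    have hEq : (fun t => iteratedDerivWithin i (fun t : ℝ => t ^ r) (Ioi 0) t)
        =ᶠ[nhds y] fun t => (∏ j ∈ Finset.range i, (r - j)) * t ^ (r - i) := by
      filter_upwards [isOpen_Ioi.mem_nhds hy] with t ht using ih t ht
    rw [hEq.deriv_eq]
    have hd : HasDerivAt (fun t : ℝ => t ^ (r - i))
        ((r - i) * y ^ (r - i - 1)) y :=
      Real.hasDerivAt_rpow_const (Or.inl (ne_of_gt hy))
    rw [(hd.const_mul _).deriv]
    rw [Finset.prod_range_succ]
    push_cast
    rw [mul_assoc]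
    congr 2
    ring_nf

lemma rpow_bound {c0 y e : ℝ} (h0 : 0 < c0) (hy : c0 ≤ y) (he1 : e ≤ 1) {M : ℕ}
    (heM : -(M:ℝ) ≤ e) : y ^ e ≤ (1 + y) * (1 + c0⁻¹) ^ M := by
  have hy0 : 0 < y := h0.trans_le hy
  have hc1 : (1:ℝ) ≤ 1 + c0⁻¹ := by
    have : 0 < c0⁻¹ := inv_pos.2 h0
    linarith
  have hP1 : (1:ℝ) ≤ (1 + c0⁻¹) ^ M := one_le_pow₀ hc1
  have h1y : (1:ℝ) ≤ 1 + y := by linarith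
  rcases le_or_gt 1 y with hy1 | hy1
  · rcases le_or_gt 0 e with he0 | he0
    · calc y ^ e ≤ y ^ (1:ℝ) := Real.rpow_le_rpow_of_exponent_le hy1 he1
        _ = y := Real.rpow_one y
        _ ≤ (1 + y) * (1 + c0⁻¹) ^ M := by nlinarith
    · calc y ^ e ≤ y ^ (0:ℝ) := Real.rpow_le_rpow_of_exponent_le hy1 he0.le
        _ = 1 := Real.rpow_zero y
        _ ≤ (1 + y) * (1 + c0⁻¹) ^ M := by nlinarith
  · rcases le_or_gt 0 e with he0 | he0
    · calc y ^ e ≤ 1 := Real.rpow_le_one hy0.le hy1.le he0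
        _ ≤ (1 + y) * (1 + c0⁻¹) ^ M := by nlinarith
    · have key : y ^ e = (y⁻¹) ^ (-e) := by
        rw [Real.inv_rpow hy0.le, ← Real.rpow_neg hy0.le, neg_neg]
      rw [key]
      have hinv : y⁻¹ ≤ 1 + c0⁻¹ := by
        have : y⁻¹ ≤ c0⁻¹ := by
          apply inv_anti₀ h0 hy
        linarith
      calc (y⁻¹) ^ (-e) ≤ (1 + c0⁻¹) ^ (-e) :=
            Real.rpow_le_rpow (inv_nonneg.2 hy0.le) hinv (by linarith)
        _ ≤ (1 + c0⁻¹) ^ (M:ℝ) :=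
            Real.rpow_le_rpow_of_exponent_le hc1 (by linarith)
        _ = (1 + c0⁻¹) ^ M := Real.rpow_natCast _ M
        _ ≤ (1 + y) * (1 + c0⁻¹) ^ M := le_mul_of_one_le_left (by positivity) h1y

lemma tg_rpow_comp {E : Type*} [NormedAddCommGroup E] [NormedSpace ℝ E]
    (r : ℝ) (hr1 : r ≤ 1) (hr2 : -1 ≤ r) {c0 : ℝ} (h0 : 0 < c0)
    {q : E → ℝ} (hq : q.HasTemperateGrowth) (hlb : ∀ x, c0 ≤ q x) :
    Function.HasTemperateGrowth (fun x => q x ^ r) := by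
  have hp : ∀ x, 0 < q x := fun x => h0.trans_le (hlb x)
  constructor
  · rw [contDiff_iff_contDiffAt]
    intro x
    exact (Real.contDiffAt_rpow_const_of_ne (ne_of_gt (hp x))).comp x hq.1.contDiffAt
  intro N
  obtain ⟨k, C, hC0, hb⟩ := hq.norm_iteratedFDeriv_le_uniform N
  set A : ℝ := (1 + |r| + N) ^ N * (1 + c0⁻¹) ^ (N + 1) with hA
  have hA0 : 0 ≤ A := by positivity
  refine ⟨k * (N + 1), ((Nat.factorial N) : ℝ) * A * (1 + C) ^ (N + 1), fun x => ?_⟩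
  have hx1 : (1:ℝ) ≤ 1 + ‖x‖ := by linarith [norm_nonneg x]
  set D : ℝ := (1 + C) * (1 + ‖x‖) ^ k with hD
  have hD1 : (1:ℝ) ≤ D := by
    have : (1:ℝ) ≤ (1 + ‖x‖) ^ k := one_le_pow₀ hx1
    nlinarith
  set y : ℝ := q x with hyy
  have hy0 : 0 < y := hp x
  have hyC : y ≤ C * (1 + ‖x‖) ^ k := by
    have := hb 0 (Nat.zero_le N) x
    rw [norm_iteratedFDeriv_zero] at this
    exact (le_abs_self y).trans this
  have h1yD : 1 + y ≤ D := by
    have : (1:ℝ) ≤ (1 + ‖x‖) ^ k := one_le_pow₀ hx1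
    rw [hD]; nlinarith
  -- outer bounds
  have hC' : ∀ i, i ≤ N →
      ‖iteratedFDerivWithin ℝ i (fun t : ℝ => t ^ r) (Ioi 0) y‖ ≤ A * (1 + y) := by
    intro i hi
    rw [norm_iteratedFDerivWithin_eq_norm_iteratedDerivWithin,
      iterDeriv_rpow r i y (mem_Ioi.2 hy0)]
    rw [Real.norm_eq_abs, abs_mul]
    have hprod : |∏ j ∈ Finset.range i, (r - (j:ℝ))| ≤ (1 + |r| + N) ^ N := by
      rw [Finset.abs_prod]
      calc ∏ j ∈ Finset.range i, |r - (j:ℝ)|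
          ≤ ∏ _j ∈ Finset.range i, (1 + |r| + N) := by
            apply Finset.prod_le_prod (fun j _ => abs_nonneg _)
            intro j hj
            rw [Finset.mem_range] at hj
            have : (j:ℝ) ≤ N := by exact_mod_cast Nat.le_of_lt_succ (Nat.lt_succ_of_lt (hj.trans_le hi))
            calc |r - (j:ℝ)| ≤ |r| + j := by
                  refine (abs_sub _ _).trans ?_
                  simp [abs_of_nonneg (by positivity : (0:ℝ) ≤ (j:ℝ))]
              _ ≤ 1 + |r| + N := by linarith
        _ = (1 + |r| + N) ^ i := by rw [Finset.prod_const, Finset.card_range]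
        _ ≤ (1 + |r| + N) ^ N := by
            apply pow_le_pow_right₀ _ hi
            have : (0:ℝ) ≤ |r| := abs_nonneg r
            have : (0:ℝ) ≤ (N:ℝ) := Nat.cast_nonneg N
            linarith
    have hpow : |y ^ (r - (i:ℝ))| ≤ (1 + y) * (1 + c0⁻¹) ^ (N + 1) := by
      rw [abs_of_nonneg (Real.rpow_nonneg hy0.le _)]
      apply rpow_bound h0 (hlb x)
      · linarith [Nat.cast_nonneg (α := ℝ) i]
      · push_cast
        have : (i:ℝ) ≤ N := by exact_mod_cast hi
        linarith
    calc |∏ j ∈ Finset.range i, (r - (j:ℝ))| * |y ^ (r - (i:ℝ))|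
        ≤ (1 + |r| + N) ^ N * ((1 + y) * (1 + c0⁻¹) ^ (N + 1)) := by
          apply mul_le_mul hprod hpow (abs_nonneg _) (by positivity)
      _ = A * (1 + y) := by rw [hA]; ring
  -- inner bounds
  have hD' : ∀ i, 1 ≤ i → i ≤ N → ‖iteratedFDerivWithin ℝ i q univ x‖ ≤ D ^ i := by
    intro i h1i hiN
    rw [iteratedFDerivWithin_univ]
    calc ‖iteratedFDeriv ℝ i q x‖ ≤ C * (1 + ‖x‖) ^ k := hb i hiN x
      _ ≤ D := by
          have : (0:ℝ) ≤ (1 + ‖x‖) ^ k := by positivity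
          rw [hD]; nlinarith
      _ ≤ D ^ i := le_self_pow₀ hD1 (by omega)
  have hg : ContDiffOn ℝ (⊤:ℕ∞) (fun t : ℝ => t ^ r) (Ioi 0) := fun t ht =>
    (Real.contDiffAt_rpow_const_of_ne (ne_of_gt ht)).contDiffWithinAt
  have key := norm_iteratedFDerivWithin_comp_le (𝕜 := ℝ) (g := fun t : ℝ => t ^ r) (f := q)
    (s := univ) (t := Ioi 0) (n := N) (N := ((⊤:ℕ∞) : WithTop ℕ∞)) hg hq.1.contDiffOn
    (mod_cast le_top) isOpen_Ioi.uniqueDiffOn uniqueDiffOn_univ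
    (fun z _ => mem_Ioi.2 (hp z)) (mem_univ x) hC' hD'
  have heq : iteratedFDerivWithin ℝ N ((fun t : ℝ => t ^ r) ∘ q) univ x
      = iteratedFDeriv ℝ N (fun x => q x ^ r) x := by
    rw [iteratedFDerivWithin_univ]; rfl
  rw [heq] at key
  refine key.trans ?_
  calc ((Nat.factorial N) : ℝ) * (A * (1 + y)) * D ^ N ≤ ((Nat.factorial N) : ℝ) * (A * D) * D ^ N := by
        have h1 : (0:ℝ) ≤ D ^ N := by positivity
        have hNf : (0:ℝ) ≤ ((Nat.factorial N) : ℝ) := Nat.cast_nonneg _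
        have h2 : A * (1 + y) ≤ A * D := mul_le_mul_of_nonneg_left h1yD hA0
        have h3 : ((Nat.factorial N):ℝ) * (A * (1 + y)) ≤ ((Nat.factorial N):ℝ) * (A * D) :=
          mul_le_mul_of_nonneg_left h2 hNf
        exact mul_le_mul_of_nonneg_right h3 h1
    _ = ((Nat.factorial N) : ℝ) * A * D ^ (N + 1) := by ring
    _ = ((Nat.factorial N) : ℝ) * A * (1 + C) ^ (N + 1) * (1 + ‖x‖) ^ (k * (N + 1)) := by
        rw [hD, mul_pow, ← pow_mul]; ring

section concrete

variable (n : ℕ) (m σ : ℝ)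

noncomputable def qFn : (Fin n → ℝ) → ℝ := fun x => (∑ i, x i ^ 2) + m ^ 2

lemma qFn_tg : (qFn n m).HasTemperateGrowth := by
  have h1 : ∀ i : Fin n, Function.HasTemperateGrowth
      (fun x : Fin n → ℝ => x i ^ 2) := by
    intro i
    have hp := (ContinuousLinearMap.proj (R := ℝ) (φ := fun _ : Fin n => ℝ) i).hasTemperateGrowth
    have := tg_smul hp hp
    simpa [pow_two, smul_eq_mul] using this
  have hsum := tg_sum (E := Fin n → ℝ) (F := ℝ) Finset.univ
    (fun i x => x i ^ 2) (fun i _ => h1 i)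
  have := tg_add hsum (Function.HasTemperateGrowth.const (m ^ 2))
  exact this

lemma qFn_lb (hm : 0 < m) : ∀ x, min 1 (m ^ 2) ≤ qFn n m x := by
  intro x
  have : (0:ℝ) ≤ ∑ i, x i ^ 2 := Finset.sum_nonneg fun i _ => sq_nonneg _
  have := min_le_right (1:ℝ) (m ^ 2)
  simp only [qFn]; linarith

lemma omega_eq : ∀ x : Fin n → ℝ, omegaFn m x = qFn n m x ^ (1/2 : ℝ) := fun x =>
  Real.sqrt_eq_rpow _

lemma omega_tg (hm : 0 < m) : (omegaFn m (d := n)).HasTemperateGrowth := by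
  have h := tg_rpow_comp (1/2 : ℝ) (by norm_num) (by norm_num)
    (lt_min one_pos (pow_pos hm 2)) (qFn_tg n m) (qFn_lb n m hm)
  have : (fun x : Fin n → ℝ => qFn n m x ^ (1/2:ℝ)) = omegaFn m := by
    funext x; rw [omega_eq]
  rwa [this] at h

lemma vFn_tg (hm : 0 < m) :
    Function.HasTemperateGrowth (fun x : Fin n → ℝ => (((2 * omegaFn m x)⁻¹ : ℝ) : ℂ)) := by
  apply tg_ofReal
  have h := tg_rpow_comp (-(1/2) : ℝ) (by norm_num) (by norm_num)
    (lt_min one_pos (pow_pos hm 2)) (qFn_tg n m) (qFn_lb n m hm)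
  have h2 := tg_smul (Function.HasTemperateGrowth.const (E := Fin n → ℝ) ((2:ℝ)⁻¹)) h
  have : (fun x : Fin n → ℝ => (2:ℝ)⁻¹ • qFn n m x ^ (-(1/2):ℝ))
      = fun x => (2 * omegaFn m x)⁻¹ := by
    funext x
    have hq0 : 0 ≤ qFn n m x :=
      le_trans (le_min zero_le_one (sq_nonneg m)) (qFn_lb n m hm x)
    rw [omega_eq, smul_eq_mul, mul_inv, Real.rpow_neg hq0]
  rwa [this] at h2

noncomputable def Jmap : (Fin n → ℝ) →L[ℝ] (Fin (n+1) → ℝ) :=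
  ContinuousLinearMap.pi (fun j : Fin (n+1) =>
    Fin.cases (0 : (Fin n → ℝ) →L[ℝ] ℝ) (fun i => ContinuousLinearMap.proj i) j)

lemma Omega_split (x : Fin n → ℝ) :
    OmegaMap m σ x = (σ * omegaFn m x) • (Pi.single (0 : Fin (n+1)) (1:ℝ) : Fin (n+1) → ℝ) + Jmap n x := by
  funext j
  refine Fin.cases ?_ (fun i => ?_) j
  · simp [OmegaMap, Jmap, ContinuousLinearMap.pi_apply, Pi.single_eq_same]
  · simp [OmegaMap, Jmap, ContinuousLinearMap.pi_apply,
      Pi.single_eq_of_ne (Fin.succ_ne_zero i)]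

lemma Omega_tg (hm : 0 < m) : (OmegaMap m σ (d := n)).HasTemperateGrowth := by
  have h1 : Function.HasTemperateGrowth (fun x : Fin n → ℝ => σ * omegaFn m x) := by
    have := tg_smul (Function.HasTemperateGrowth.const (E := Fin n → ℝ) σ) (omega_tg n m hm)
    simpa [smul_eq_mul] using this
  have h2 := tg_add (tg_smul h1
    (Function.HasTemperateGrowth.const ((Pi.single (0 : Fin (n+1)) (1:ℝ) : Fin (n+1) → ℝ))))
    (Jmap n).hasTemperateGrowth
  have : (fun x : Fin n → ℝ =>
      (σ * omegaFn m x) • (Pi.single (0 : Fin (n+1)) (1:ℝ) : Fin (n+1) → ℝ) + Jmap n x) = OmegaMap m σ := by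
    funext x; rw [← Omega_split]
  rwa [this] at h2

lemma Omega_upper : ∃ (k : ℕ) (C : ℝ), ∀ x : Fin n → ℝ,
    ‖x‖ ≤ C * (1 + ‖OmegaMap m σ x‖) ^ k := by
  refine ⟨1, 1, fun x => ?_⟩
  have hx : ‖x‖ ≤ ‖OmegaMap m σ x‖ := by
    rw [pi_norm_le_iff_of_nonneg (norm_nonneg _)]
    intro i
    have : x i = OmegaMap m σ x i.succ := by simp [OmegaMap]
    rw [Real.norm_eq_abs, this]
    exact (norm_le_pi_norm (OmegaMap m σ x) i.succ)
  nlinarith [norm_nonneg (OmegaMap m σ x), norm_nonneg x]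
end concrete

def auxComp (n : ℕ) (m σ : ℝ) (hm : 0 < m) : Sch (n+1) →L[ℂ] SchwartzMap (Fin n → ℝ) ℂ :=
  SchwartzMap.compCLM ℂ (Omega_tg n m σ hm) (Omega_upper n m σ)

def auxMul (n : ℕ) (m : ℝ) (hm : 0 < m) :
    SchwartzMap (Fin n → ℝ) ℂ →L[ℝ] SchwartzMap (Fin n → ℝ) ℂ :=
  SchwartzMap.bilinLeftCLM (ContinuousLinearMap.mul ℝ ℂ) (vFn_tg n m hm)

def auxS (n : ℕ) (m σ : ℝ) (hm : 0 < m) : Sch (n+1) →L[ℂ] Sch n where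
  toFun := fun f => auxMul n m hm (auxComp n m σ hm f)
  map_add' := fun f g => by
    show auxMul n m hm (auxComp n m σ hm (f + g)) = _
    rw [map_add, map_add]
  map_smul' := fun c f => by
    show auxMul n m hm (auxComp n m σ hm (c • f)) = c • auxMul n m hm (auxComp n m σ hm f)
    rw [_root_.map_smul]
    ext x
    exact mul_assoc c _ _
  cont := by
    show Continuous fun f => auxMul n m hm (auxComp n m σ hm f)
    exact (auxMul n m hm).continuous.comp (auxComp n m σ hm).continuous

lemma auxS_apply (n : ℕ) (m σ : ℝ) (hm : 0 < m) (f : Sch (n+1)) (p : Fin n → ℝ) :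
    auxS n m σ hm f p = f (OmegaMap m σ p) * (((2 * omegaFn m p)⁻¹ : ℝ) : ℂ) := rfl


end Statement0Aux

/-- For each tempered distribution `a ∈ 𝓢'(ℝ^n)`, the formulas
`(a(𝐩)δ_σ(p²−m²), f) = (a, 𝐩 ↦ f(Ω_σ(𝐩))/(2ω(𝐩)))` (σ = ±1) define tempered
distributions on `ℝ^{1+n}`, and the resulting maps `a ↦ a(𝐩)δ_σ(p²−m²)` are
`ℂ`-linear and sequentially continuous w.r.t. the weak* topologies. -/
theorem statement0 (n : ℕ) (hn : 1 ≤ n) (m : ℝ) (hm : 0 < m)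
    (σ : ℝ) (hσ : σ = 1 ∨ σ = -1) :
    ∃ T : TDist n →ₗ[ℂ] TDist (n + 1),
      DeltaPM m σ (fun a => T a) ∧
      ∀ (a : ℕ → TDist n) (a₀ : TDist n),
        (∀ g : Sch n, Tendsto (fun k => a k g) atTop (𝓝 (a₀ g))) →
        ∀ f : Sch (n + 1), Tendsto (fun k => T (a k) f) atTop (𝓝 (T a₀ f)) := by
  refine ⟨{ toFun := fun a => a.comp (auxS n m σ hm),
            map_add' := fun a b => rfl,
            map_smul' := fun c a => rfl }, ?_, ?_⟩
  · intro a f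
    refine ⟨auxS n m σ hm f, fun p => ?_, rfl⟩
    rw [auxS_apply, div_eq_mul_inv]
    congr 1
    push_cast
    ring
  · intro a a₀ h f
    exact h (auxS n m σ hm f)


end
end

section
/- Let a₀, a₁, a ∈ S'(ℝ^n). Then (i) a(𝐩)δ_+(p²−m²) = 0 if and only if a = 0, and likewise a(𝐩)δ_−(p²−m²) = 0 if and only if a = 0; (ii) a₀(𝐩)δ_+(p²−m²) + a₁(𝐩)δ_−(p²−m²) = 0 if and only if a₀ = 0 and a₁ = 0. -/
open MeasureTheory Filter Topology
set_option maxHeartbeats 1000000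
set_option synthInstance.maxHeartbeats 400000
noncomputable section

section AuxProofs

open SchwartzMap

/-- A smooth compactly supported function is Schwartz. -/
def toSch {d : ℕ} (F : (Fin d → ℝ) → ℂ) (h1 : ContDiff ℝ (⊤ : ℕ∞) F)
    (h2 : HasCompactSupport F) : Sch d where
  toFun := F
  smooth' := h1
  decay' := by
    intro k n
    have hcont : Continuous fun x : Fin d → ℝ => ‖x‖ ^ k * ‖iteratedFDeriv ℝ n F x‖ :=
      (continuous_norm.pow k).mul (h1.continuous_iteratedFDeriv (mod_cast le_top)).norm
    have hsupp : HasCompactSupport fun x : Fin d → ℝ => ‖x‖ ^ k * ‖iteratedFDeriv ℝ n F x‖ :=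
      HasCompactSupport.mul_left ((h2.iteratedFDeriv n).norm)
    obtain ⟨C, hC⟩ := hcont.bddAbove_range_of_hasCompactSupport hsupp
    exact ⟨C, fun x => hC (Set.mem_range_self x)⟩

@[simp] lemma toSch_apply {d : ℕ} (F : (Fin d → ℝ) → ℂ) (h1 : ContDiff ℝ (⊤ : ℕ∞) F)
    (h2 : HasCompactSupport F) (x : Fin d → ℝ) : toSch F h1 h2 x = F x := rfl

lemma iteratedFDeriv_eq_zero_of_eventually {E F : Type*} [NormedAddCommGroup E]
    [NormedSpace ℝ E] [NormedAddCommGroup F] [NormedSpace ℝ F] {f : E → F} {x : E}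
    (h : ∀ᶠ y in 𝓝 x, f y = 0) (n : ℕ) : iteratedFDeriv ℝ n f x = 0 := by
  have h1 : f =ᶠ[𝓝[Set.univ] x] (fun _ => (0 : F)) := by
    rw [nhdsWithin_univ]; exact h
  have h2 : iteratedFDerivWithin ℝ n f Set.univ x =
      iteratedFDerivWithin ℝ n (fun _ : E => (0 : F)) Set.univ x :=
    h1.iteratedFDerivWithin_eq h.self_of_nhds n
  have e1 : iteratedFDerivWithin ℝ n f Set.univ x = iteratedFDeriv ℝ n f x := by
    rw [iteratedFDerivWithin_univ]
  have e2 : iteratedFDerivWithin ℝ n (fun _ : E => (0 : F)) Set.univ x =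
      iteratedFDeriv ℝ n (fun _ : E => (0 : F)) x := by
    rw [iteratedFDerivWithin_univ]
  rw [e1, e2] at h2
  rw [h2]
  simp [iteratedFDeriv_zero_fun]

/-- A tempered distribution vanishing on all compactly supported Schwartz functions is zero. -/
lemma tdist_eq_zero_of_compactSupport {d : ℕ} (a : TDist d)
    (H : ∀ g : Sch d, HasCompactSupport (⇑g) → a g = 0) : a = 0 := by
  ext g
  simp only [ContinuousLinearMap.zero_apply]
  let χ : ContDiffBump (0 : Fin d → ℝ) := ⟨1, 2, one_pos, one_lt_two⟩
  have hMex : ∀ i : ℕ, ∃ M : ℝ, 0 ≤ M ∧ ∀ y, ‖iteratedFDeriv ℝ i (⇑χ) y‖ ≤ M := by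
    intro i
    have hb : BddAbove (Set.range fun y => ‖iteratedFDeriv ℝ i (⇑χ) y‖) :=
      ((χ.contDiff.continuous_iteratedFDeriv (mod_cast le_top)).norm).bddAbove_range_of_hasCompactSupport
        (χ.hasCompactSupport.iteratedFDeriv i).norm
    obtain ⟨M, hM⟩ := hb
    exact ⟨max M 0, le_max_right _ _,
      fun y => le_trans (hM (Set.mem_range_self y)) (le_max_left _ _)⟩
  choose Mf hMf0 hMf using hMex
  let L : ℕ → ((Fin d → ℝ) →L[ℝ] (Fin d → ℝ)) :=
    fun k => (((k : ℝ) + 1)⁻¹) • ContinuousLinearMap.id ℝ (Fin d → ℝ)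
  have hLapp : ∀ (k : ℕ) (y : Fin d → ℝ), L k y = ((k : ℝ) + 1)⁻¹ • y := fun k y => rfl
  have hk1pos : ∀ k : ℕ, (0 : ℝ) < (k : ℝ) + 1 := fun k => by positivity
  have hLnorm : ∀ k : ℕ, ‖L k‖ ≤ 1 := by
    intro k
    apply ContinuousLinearMap.opNorm_le_bound _ zero_le_one
    intro y
    rw [hLapp, norm_smul, Real.norm_eq_abs, abs_of_pos (by positivity), one_mul]
    have hk0 : (0 : ℝ) ≤ (k : ℝ) := Nat.cast_nonneg k
    have h3 : ((k : ℝ) + 1)⁻¹ ≤ 1 := by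
      rw [inv_le_one_iff₀]
      right
      linarith
    nlinarith [norm_nonneg y]
  have hsm : ∀ k : ℕ, ContDiff ℝ (⊤ : ℕ∞) fun x => χ (L k x) • g x :=
    fun k => (χ.contDiff.comp (L k).contDiff).smul g.smooth'
  have hcs : ∀ k : ℕ, HasCompactSupport fun x => χ (L k x) • g x := by
    intro k
    apply HasCompactSupport.intro (isCompact_closedBall (0 : Fin d → ℝ) (2 * ((k : ℝ) + 1)))
    intro x hx
    have hx' : 2 * ((k : ℝ) + 1) < ‖x‖ := by
      simp only [Metric.mem_closedBall, dist_zero_right, not_le] at hx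
      exact hx
    have hzd : χ.rOut ≤ dist (L k x) 0 := by
      rw [dist_zero_right, hLapp, norm_smul, Real.norm_eq_abs, abs_of_pos (by positivity)]
      show (2 : ℝ) ≤ ((k : ℝ) + 1)⁻¹ * ‖x‖
      rw [le_inv_mul_iff₀ (hk1pos k)]
      nlinarith [hk1pos k]
    rw [χ.zero_of_le_dist hzd, zero_smul]
  -- quantitative seminorm estimate
  have key : ∀ (k' n' k : ℕ),
      SchwartzMap.seminorm ℝ k' n' (toSch _ (hsm k) (hcs k) - g) ≤
        (∑ i ∈ Finset.range (n' + 1), (n'.choose i : ℝ) * (1 + Mf i) *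
          SchwartzMap.seminorm ℝ (k' + 1) (n' - i) g) / ((k : ℝ) + 1) := by
    intro k' n' k
    set D : ℝ := ∑ i ∈ Finset.range (n' + 1), (n'.choose i : ℝ) * (1 + Mf i) *
      SchwartzMap.seminorm ℝ (k' + 1) (n' - i) g with hD
    have hD0 : 0 ≤ D := by
      apply Finset.sum_nonneg
      intro i _
      have h1 := hMf0 i
      have h2 : (0 : ℝ) ≤ SchwartzMap.seminorm ℝ (k' + 1) (n' - i) g :=
        apply_nonneg (SchwartzMap.seminorm ℝ (k' + 1) (n' - i)) g
      positivity
    apply SchwartzMap.seminorm_le_bound ℝ k' n' _ (by positivity)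
    intro x
    set u : (Fin d → ℝ) → ℝ := fun y => 1 - χ (L k y) with hu
    set w : (Fin d → ℝ) → ℂ := fun y => u y • g y with hw
    have hcoe : (⇑(toSch _ (hsm k) (hcs k) - g)) = fun y => -(w y) := by
      funext y
      simp only [SchwartzMap.sub_apply, toSch_apply, hw, hu, sub_smul, one_smul]
      ring
    have hnegD : iteratedFDeriv ℝ n' (fun y => -(w y)) x = -(iteratedFDeriv ℝ n' w x) :=
      iteratedFDeriv_neg_apply
    rw [hcoe, hnegD, norm_neg]
    rcases lt_or_ge ‖x‖ ((k : ℝ) + 1) with hxk | hxk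
    · have hzero : iteratedFDeriv ℝ n' w x = 0 := by
        apply iteratedFDeriv_eq_zero_of_eventually _ n'
        have hball : Metric.ball (0 : Fin d → ℝ) ((k : ℝ) + 1) ∈ 𝓝 x :=
          Metric.isOpen_ball.mem_nhds (by simpa [Metric.mem_ball, dist_zero_right] using hxk)
        filter_upwards [hball] with y hy
        have hy' : ‖y‖ < (k : ℝ) + 1 := by
          simpa [Metric.mem_ball, dist_zero_right] using hy
        have h1 : χ (L k y) = 1 := by
          apply χ.one_of_mem_closedBall
          rw [Metric.mem_closedBall, dist_zero_right, hLapp, norm_smul, Real.norm_eq_abs,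
            abs_of_pos (by positivity)]
          show ((k : ℝ) + 1)⁻¹ * ‖y‖ ≤ 1
          rw [inv_mul_le_iff₀ (hk1pos k)]
          nlinarith
        simp [hw, hu, h1]
      rw [hzero, norm_zero, mul_zero]
      positivity
    · have hx0 : (0 : ℝ) < ‖x‖ := lt_of_lt_of_le (hk1pos k) hxk
      have husm : ContDiff ℝ (⊤ : ℕ∞) u :=
        contDiff_const.sub (χ.contDiff.comp (L k).contDiff)
      have hsmul := norm_iteratedFDeriv_smul_le husm g.smooth' x
        (n := n') (mod_cast le_top)
      have hdu : ∀ i : ℕ, ‖iteratedFDeriv ℝ i u x‖ ≤ 1 + Mf i := by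
        intro i
        rcases Nat.eq_zero_or_pos i with hi | hi
        · subst hi
          rw [norm_iteratedFDeriv_zero]
          have h0 := χ.nonneg' (L k x)
          have h1 := χ.le_one (x := L k x)
          have h2 : ‖u x‖ ≤ 1 := by
            rw [Real.norm_eq_abs, abs_le]
            constructor <;> simp only [hu] <;> linarith
          linarith [hMf0 0]
        · have hne : i ≠ 0 := hi.ne'
          have hχL : ContDiff ℝ (⊤ : ℕ∞) (⇑χ ∘ ⇑(L k)) := χ.contDiff.comp (L k).contDiff
          have hadd : iteratedFDeriv ℝ i u x = -(iteratedFDeriv ℝ i (⇑χ ∘ (L k)) x) := by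
            have hrepr : u = (fun _ : Fin d → ℝ => (1 : ℝ)) + (-(⇑χ ∘ ⇑(L k))) := by
              funext y
              simp [hu, Function.comp, sub_eq_add_neg]
            have h4 : iteratedFDeriv ℝ i ((fun _ : Fin d → ℝ => (1 : ℝ)) + (-(⇑χ ∘ ⇑(L k)))) x =
                iteratedFDeriv ℝ i (fun _ : Fin d → ℝ => (1 : ℝ)) x +
                  iteratedFDeriv ℝ i (-(⇑χ ∘ ⇑(L k))) x :=
              iteratedFDeriv_add_apply contDiff_const.contDiffAt ((hχL.of_le (mod_cast le_top)).neg).contDiffAt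
            rw [hrepr, h4, congrFun (iteratedFDeriv_const_of_ne hne (1 : ℝ)) x,
              iteratedFDeriv_neg_apply]
            simp
          rw [hadd, norm_neg]
          have hcomp : iteratedFDeriv ℝ i (⇑χ ∘ (L k)) x =
              (iteratedFDeriv ℝ i (⇑χ) (L k x)).compContinuousLinearMap fun _ => L k :=
            (L k).iteratedFDeriv_comp_right (χ.contDiff (n := ⊤)) x (mod_cast le_top)
          rw [hcomp]
          calc ‖(iteratedFDeriv ℝ i (⇑χ) (L k x)).compContinuousLinearMap fun _ => L k‖
              ≤ ‖iteratedFDeriv ℝ i (⇑χ) (L k x)‖ * ∏ _j : Fin i, ‖L k‖ :=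
                ContinuousMultilinearMap.norm_compContinuousLinearMap_le _ _
            _ ≤ Mf i * 1 := by
                apply mul_le_mul (hMf i (L k x)) _ _ (hMf0 i)
                · rw [Finset.prod_const]
                  simp only [Finset.card_univ, Fintype.card_fin]
                  exact pow_le_one₀ (norm_nonneg _) (hLnorm k)
                · exact Finset.prod_nonneg fun _ _ => norm_nonneg _
            _ ≤ 1 + Mf i := by linarith
      calc ‖x‖ ^ k' * ‖iteratedFDeriv ℝ n' w x‖
          ≤ ‖x‖ ^ k' * ∑ i ∈ Finset.range (n' + 1), (n'.choose i : ℝ) *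
              ‖iteratedFDeriv ℝ i u x‖ * ‖iteratedFDeriv ℝ (n' - i) (⇑g) x‖ := by
            apply mul_le_mul_of_nonneg_left hsmul (by positivity)
        _ = ∑ i ∈ Finset.range (n' + 1), (n'.choose i : ℝ) * ‖iteratedFDeriv ℝ i u x‖ *
              (‖x‖ ^ k' * ‖iteratedFDeriv ℝ (n' - i) (⇑g) x‖) := by
            rw [Finset.mul_sum]; apply Finset.sum_congr rfl; intro i _; ring
        _ ≤ ∑ i ∈ Finset.range (n' + 1), (n'.choose i : ℝ) * (1 + Mf i) *
              (((k : ℝ) + 1)⁻¹ * SchwartzMap.seminorm ℝ (k' + 1) (n' - i) g) := by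
            apply Finset.sum_le_sum
            intro i _
            have hterm : ‖x‖ ^ k' * ‖iteratedFDeriv ℝ (n' - i) (⇑g) x‖ ≤
                ((k : ℝ) + 1)⁻¹ * SchwartzMap.seminorm ℝ (k' + 1) (n' - i) g := by
              have h1 : (‖x‖ ^ k' * ‖iteratedFDeriv ℝ (n' - i) (⇑g) x‖) * ((k : ℝ) + 1) ≤
                  (‖x‖ ^ k' * ‖iteratedFDeriv ℝ (n' - i) (⇑g) x‖) * ‖x‖ :=
                mul_le_mul_of_nonneg_left hxk (by positivity)
              have h2 : (‖x‖ ^ k' * ‖iteratedFDeriv ℝ (n' - i) (⇑g) x‖) * ‖x‖ =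
                  ‖x‖ ^ (k' + 1) * ‖iteratedFDeriv ℝ (n' - i) (⇑g) x‖ := by
                rw [pow_succ]; ring
              have h3 := SchwartzMap.le_seminorm ℝ (k' + 1) (n' - i) g x
              rw [inv_mul_eq_div, le_div_iff₀ (hk1pos k)]
              linarith
            exact mul_le_mul (mul_le_mul_of_nonneg_left (hdu i) (Nat.cast_nonneg _)) hterm
              (by positivity) (by have := hMf0 i; positivity)
        _ = D / ((k : ℝ) + 1) := by
            rw [hD, Finset.sum_div]
            exact Finset.sum_congr rfl fun i _ => by ring
  -- convergence in the Schwartz topology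
  have htend : Tendsto (fun k : ℕ => toSch _ (hsm k) (hcs k)) atTop (𝓝 g) := by
    rw [(schwartz_withSeminorms ℝ (Fin d → ℝ) ℂ).tendsto_nhds]
    intro i ε hε
    set D : ℝ := ∑ j ∈ Finset.range (i.2 + 1), (i.2.choose j : ℝ) * (1 + Mf j) *
      SchwartzMap.seminorm ℝ (i.1 + 1) (i.2 - j) g with hDdef
    have h0 : Tendsto (fun k : ℕ => D / ((k : ℝ) + 1)) atTop (𝓝 0) := by
      have := (tendsto_const_div_atTop_nhds_zero_nat D).comp (tendsto_add_atTop_nat 1)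
      convert this using 2 with k
      simp [Function.comp]
    filter_upwards [h0.eventually (gt_mem_nhds hε)] with k hk
    exact lt_of_le_of_lt (key i.1 i.2 k) hk
  have hz : Tendsto (fun k : ℕ => a (toSch _ (hsm k) (hcs k))) atTop (𝓝 (a g)) :=
    (a.continuous.tendsto g).comp htend
  have hzz : (fun k : ℕ => a (toSch _ (hsm k) (hcs k))) = fun _ => (0 : ℂ) :=
    funext fun k => H _ (hcs k)
  rw [hzz] at hz
  exact tendsto_nhds_unique hz tendsto_const_nhds

lemma omegaFn_contDiff {d : ℕ} {m : ℝ} (hm : 0 < m) :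
    ContDiff ℝ (⊤ : ℕ∞) (omegaFn m (d := d)) := by
  have hpos : ∀ p : Fin d → ℝ, 0 < (∑ i, p i ^ 2) + m ^ 2 := by
    intro p
    have : 0 ≤ ∑ i, p i ^ 2 := Finset.sum_nonneg fun i _ => sq_nonneg _
    positivity
  have hin : ContDiff ℝ (⊤ : ℕ∞) fun p : Fin d → ℝ => (∑ i, p i ^ 2) + m ^ 2 := by
    apply ContDiff.add _ contDiff_const
    apply ContDiff.sum
    intro i _
    exact ((ContinuousLinearMap.proj i : (Fin d → ℝ) →L[ℝ] ℝ).contDiff).pow 2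
  rw [contDiff_iff_contDiffAt]
  intro p
  exact (Real.contDiffAt_sqrt (hpos p).ne').comp p hin.contDiffAt

lemma le_omegaFn {d : ℕ} {m : ℝ} (hm : 0 < m) (p : Fin d → ℝ) : m ≤ omegaFn m p := by
  have hsum : 0 ≤ ∑ i, p i ^ 2 := Finset.sum_nonneg fun i _ => sq_nonneg _
  calc m = Real.sqrt (m ^ 2) := by rw [Real.sqrt_sq hm.le]
    _ ≤ Real.sqrt ((∑ i, p i ^ 2) + m ^ 2) := Real.sqrt_le_sqrt (by linarith)
    _ = omegaFn m p := rfl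

lemma omegaFn_pos {d : ℕ} {m : ℝ} (hm : 0 < m) (p : Fin d → ℝ) : 0 < omegaFn m p :=
  lt_of_lt_of_le hm (le_omegaFn hm p)

lemma deltaPM_zero {d : ℕ} {m σ : ℝ} {T : TDist d → TDist (d + 1)} (hT : DeltaPM m σ T) :
    T 0 = 0 := by
  ext f
  obtain ⟨g, -, h2⟩ := hT 0 f
  simpa using h2

lemma deltaPM_key {n : ℕ} {m : ℝ} (hm : 0 < m) (σ : ℝ) (hσ : σ = 1 ∨ σ = -1)
    {T T' : TDist n → TDist (n + 1)} (hT : DeltaPM m σ T) (hT' : DeltaPM m (-σ) T')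
    (a a' : TDist n) (hsum : T a + T' a' = 0) : a = 0 := by
  have hσ2 : σ * σ = 1 := by rcases hσ with h | h <;> rw [h] <;> norm_num
  have hσabs : |σ| = 1 := by rcases hσ with h | h <;> rw [h] <;> norm_num
  apply tdist_eq_zero_of_compactSupport
  intro g hg
  obtain ⟨R, hR⟩ : ∃ R : ℝ, ∀ p ∈ tsupport (⇑g), omegaFn m p ≤ R := by
    obtain ⟨R, hR⟩ := (hg.image (omegaFn_contDiff hm).continuous).bddAbove
    exact ⟨R, fun p hp => hR (Set.mem_image_of_mem _ hp)⟩
  set R' : ℝ := max R (m + 1) with hR'def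
  set c : ℝ := (m + R') / 2 with hcdef
  have hmR' : m + 1 ≤ R' := le_max_right _ _
  have hrin : (0 : ℝ) < (R' - m) / 2 := by linarith
  let ψ : ContDiffBump c := ⟨(R' - m) / 2, (R' - m) / 2 + m / 2, hrin, by linarith⟩
  have hψrout : ψ.rOut = (R' - m) / 2 + m / 2 := rfl
  have hψrin : ψ.rIn = (R' - m) / 2 := rfl
  set G : (Fin n → ℝ) → ℂ := fun p => (2 * ((omegaFn m p : ℝ) : ℂ)) * g p with hGdef
  set f : (Fin (n + 1) → ℝ) → ℂ := fun x => ψ (σ * x 0) • G (Fin.tail x) with hfdef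
  have hωs : ContDiff ℝ (⊤ : ℕ∞) (omegaFn m (d := n)) := omegaFn_contDiff hm
  have hGs : ContDiff ℝ (⊤ : ℕ∞) G :=
    (contDiff_const.mul (Complex.ofRealCLM.contDiff.comp hωs)).mul g.smooth'
  have hψs : ContDiff ℝ (⊤ : ℕ∞) fun x : Fin (n + 1) → ℝ => ψ (σ * x 0) :=
    ψ.contDiff.comp (contDiff_const.mul
      (ContinuousLinearMap.proj (0 : Fin (n + 1)) :
        (Fin (n + 1) → ℝ) →L[ℝ] ℝ).contDiff)
  have htailc : ContDiff ℝ (⊤ : ℕ∞) fun x : Fin (n + 1) → ℝ => Fin.tail x :=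
    (ContinuousLinearMap.pi fun i : Fin n =>
      (ContinuousLinearMap.proj i.succ : (Fin (n + 1) → ℝ) →L[ℝ] ℝ)).contDiff
  have hfs : ContDiff ℝ (⊤ : ℕ∞) f := hψs.smul (hGs.comp htailc)
  obtain ⟨Bg, hBg⟩ : ∃ Bg : ℝ, tsupport (⇑g) ⊆ Metric.closedBall 0 Bg :=
    hg.isBounded.subset_closedBall 0
  set B : ℝ := max (|c| + ψ.rOut) (max Bg 0) with hBdef
  have hB0 : 0 ≤ B := le_trans (le_max_right Bg 0) (le_max_right _ _)
  have hfc : HasCompactSupport f := by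
    apply HasCompactSupport.intro (isCompact_closedBall (0 : Fin (n + 1) → ℝ) B)
    intro x hx
    have hxB : B < ‖x‖ := by
      simp only [Metric.mem_closedBall, dist_zero_right, not_le] at hx
      exact hx
    by_cases h0 : ψ (σ * x 0) = 0
    · simp [hfdef, h0]
    · have hd : dist (σ * x 0) c < ψ.rOut := by
        by_contra hcon
        exact h0 (ψ.zero_of_le_dist (le_of_not_gt hcon))
      have hx0 : |x 0| ≤ |c| + ψ.rOut := by
        have h1 : |σ * x 0| - |c| ≤ |σ * x 0 - c| := abs_sub_abs_le_abs_sub _ _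
        rw [abs_mul, hσabs, one_mul] at h1
        rw [Real.dist_eq] at hd
        linarith
      have hex : ¬∀ i, ‖x i‖ ≤ B := by
        intro hall
        exact absurd ((pi_norm_le_iff_of_nonneg hB0).mpr hall) (not_le.mpr hxB)
      push_neg at hex
      obtain ⟨j, hj⟩ := hex
      have hj0 : j ≠ 0 := by
        rintro rfl
        rw [Real.norm_eq_abs] at hj
        have : |c| + ψ.rOut ≤ B := le_max_left _ _
        linarith
      obtain ⟨i, rfl⟩ : ∃ i : Fin n, j = i.succ := ⟨j.pred hj0, (Fin.succ_pred j hj0).symm⟩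
      have htb : Bg < ‖Fin.tail x‖ := by
        have h1 : ‖x i.succ‖ ≤ ‖Fin.tail x‖ := norm_le_pi_norm (Fin.tail x) i
        have h2 : Bg ≤ B := le_trans (le_max_left Bg 0) (le_max_right _ _)
        linarith
      have hnm : Fin.tail x ∉ tsupport (⇑g) := by
        intro hmem
        have := hBg hmem
        rw [Metric.mem_closedBall, dist_zero_right] at this
        linarith
      have hgz : g (Fin.tail x) = 0 := image_eq_zero_of_notMem_tsupport hnm
      simp [hfdef, hGdef, hgz]
  obtain ⟨gp, hgpv, hgpe⟩ := hT a (toSch f hfs hfc)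
  obtain ⟨gm, hgmv, hgme⟩ := hT' a' (toSch f hfs hfc)
  have hsum' : a gp + a' gm = 0 := by
    have h := congrArg (fun S : TDist (n + 1) => S (toSch f hfs hfc)) hsum
    simpa [ContinuousLinearMap.add_apply, hgpe, hgme] using h
  have hgm0 : gm = 0 := by
    ext p
    rw [hgmv p]
    have hval : (toSch f hfs hfc) (OmegaMap m (-σ) p) = 0 := by
      rw [toSch_apply]
      have hx0 : (OmegaMap m (-σ) p) 0 = (-σ) * omegaFn m p := by
        simp [OmegaMap]
      have hψ0 : ψ (σ * ((OmegaMap m (-σ) p) 0)) = 0 := by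
        rw [hx0]
        apply ψ.zero_of_le_dist
        have heq : σ * (-σ * omegaFn m p) = -omegaFn m p := by
          have : σ * (-σ * omegaFn m p) = -(σ * σ) * omegaFn m p := by ring
          rw [this, hσ2]; ring
        rw [heq, Real.dist_eq, hψrout]
        have hω := omegaFn_pos hm p
        have habs : |-omegaFn m p - c| = omegaFn m p + c := by
          rw [abs_of_nonpos (by nlinarith)]
          ring
        rw [habs]
        nlinarith
      show ψ (σ * ((OmegaMap m (-σ) p) 0)) • G (Fin.tail (OmegaMap m (-σ) p)) = 0
      rw [hψ0, zero_smul]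
    rw [hval]
    simp
  have hgpg : gp = g := by
    ext p
    rw [hgpv p]
    have hσσ : σ * (σ * omegaFn m p) = omegaFn m p := by
      rw [← mul_assoc, hσ2, one_mul]
    have hx0 : (OmegaMap m σ p) 0 = σ * omegaFn m p := by simp [OmegaMap]
    have htl : Fin.tail (OmegaMap m σ p) = p := Fin.tail_cons _ _
    have hfval : (toSch f hfs hfc) (OmegaMap m σ p) =
        ψ (omegaFn m p) • ((2 * ((omegaFn m p : ℝ) : ℂ)) * g p) := by
      rw [toSch_apply]
      show ψ (σ * ((OmegaMap m σ p) 0)) • G (Fin.tail (OmegaMap m σ p)) = _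
      rw [hx0, htl, hσσ, hGdef]
    rw [hfval]
    have hω0 : ((2 : ℂ) * ((omegaFn m p : ℝ) : ℂ)) ≠ 0 := by
      apply mul_ne_zero two_ne_zero
      rw [Complex.ofReal_ne_zero]
      exact (omegaFn_pos hm p).ne'
    by_cases hp : p ∈ tsupport (⇑g)
    · have h1 : ψ (omegaFn m p) = 1 := by
        apply ψ.one_of_mem_closedBall
        rw [Metric.mem_closedBall, Real.dist_eq, hψrin]
        have h2 := hR p hp
        have h3 := le_omegaFn hm p
        have h4 : omegaFn m p ≤ R' := le_trans h2 (le_max_left _ _)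
        rw [abs_le]
        constructor <;> [skip; skip] <;> simp only [hcdef] <;> linarith
      rw [h1, one_smul]
      exact mul_div_cancel_left₀ (g p) hω0
    · have hgz : g p = 0 := image_eq_zero_of_notMem_tsupport hp
      simp [hgz]
  rw [hgm0, map_zero, add_zero, hgpg] at hsum'
  exact hsum'

end AuxProofs

/-- Let `a₀, a₁, a ∈ 𝓢'(ℝ^n)`. Then (i) `a(𝐩)δ_±(p²−m²) = 0` iff
`a = 0`; (ii) `a₀(𝐩)δ_+(p²−m²) + a₁(𝐩)δ_−(p²−m²) = 0` iff `a₀ = 0` and `a₁ = 0`.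
Here `Tp`/`Tm` are the maps `a ↦ a(𝐩)δ_+(p²−m²)` / `a ↦ a(𝐩)δ_−(p²−m²)`,
characterized by the hypotheses `hTp`/`hTm`. -/
theorem statement1 (n : ℕ) (hn : 1 ≤ n) (m : ℝ) (hm : 0 < m)
    (Tp Tm : TDist n → TDist (n + 1))
    (hTp : DeltaPM m 1 Tp) (hTm : DeltaPM m (-1) Tm)
    (a₀ a₁ a : TDist n) :
    ((Tp a = 0 ↔ a = 0) ∧ (Tm a = 0 ↔ a = 0)) ∧
    (Tp a₀ + Tm a₁ = 0 ↔ a₀ = 0 ∧ a₁ = 0) := by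
  have hTp' : DeltaPM m (-(-1)) Tp := by rw [neg_neg]; exact hTp
  have hTp0 : Tp 0 = 0 := deltaPM_zero hTp
  have hTm0 : Tm 0 = 0 := deltaPM_zero hTm
  refine ⟨⟨⟨fun h => ?_, fun h => by rw [h, hTp0]⟩, ⟨fun h => ?_, fun h => by rw [h, hTm0]⟩⟩,
    ⟨fun h => ?_, fun h => by rw [h.1, h.2, hTp0, hTm0, add_zero]⟩⟩
  · exact deltaPM_key hm 1 (Or.inl rfl) hTp hTm a 0 (by rw [hTm0, add_zero]; exact h)
  · exact deltaPM_key hm (-1) (Or.inr rfl) hTm hTp' a 0 (by rw [hTp0, add_zero]; exact h)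
  · have ha₀ : a₀ = 0 := deltaPM_key hm 1 (Or.inl rfl) hTp hTm a₀ a₁ h
    have h₁ : Tm a₁ = 0 := by
      rw [ha₀, hTp0, zero_add] at h
      exact h
    have ha₁ : a₁ = 0 :=
      deltaPM_key hm (-1) (Or.inr rfl) hTm hTp' a₁ 0 (by rw [hTp0, add_zero]; exact h₁)
    exact ⟨ha₀, ha₁⟩

end
end

section
/- The Heaviside functions Θ(p⁺) and Θ(−p⁺), as well as the functions |p⁺|^k for every k ∈ ℤ (in particular the non-locally-integrable function 1/|p⁺|), restricted to ℝ^n ∖ {p⁺=0}, are multiplicators in S_{p⁺}(ℝ^n). -/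
open MeasureTheory Filter Topology
set_option maxHeartbeats 1000000
set_option synthInstance.maxHeartbeats 400000
noncomputable section

set_option linter.unusedSectionVars false

namespace St13
variable {d : ℕ}

/-- iterated partial derivative along a list of directions (head = outermost). -/
def chainD (l : List (Fin d)) (f : (Fin d → ℝ) → ℂ) : (Fin d → ℝ) → ℂ :=
  l.foldr (fun i g => pdCoord i g) f

lemma chainD_nil (f : (Fin d → ℝ) → ℂ) : chainD [] f = f := rfl

lemma chainD_cons (i : Fin d) (l : List (Fin d)) (f : (Fin d → ℝ) → ℂ) :
    chainD (i :: l) f = pdCoord i (chainD l f) := rfl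

lemma chainD_append (l l' : List (Fin d)) (f : (Fin d → ℝ) → ℂ) :
    chainD (l ++ l') f = chainD l (chainD l' f) := List.foldr_append

lemma chainD_replicate (n : ℕ) (i : Fin d) (f : (Fin d → ℝ) → ℂ) :
    chainD (List.replicate n i) f = (pdCoord i)^[n] f := by
  induction n with
  | zero => rfl
  | succ n ih => rw [List.replicate_succ, chainD_cons, ih, Function.iterate_succ']; rfl

/-- canonical list of a multi-index -/
def canonList (α : Fin d → ℕ) : List (Fin d) :=
  (List.finRange d).flatMap (fun i => List.replicate (α i) i)

lemma pdMulti_eq_chainD (α : Fin d → ℕ) (f : (Fin d → ℝ) → ℂ) :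
    pdMulti α f = chainD (canonList α) f := by
  unfold pdMulti canonList
  generalize List.finRange d = L
  induction L with
  | nil => rfl
  | cons i L ih =>
      rw [List.foldr_cons, ih, List.flatMap_cons, chainD_append, chainD_replicate]

lemma count_canonList_aux (α : Fin d → ℕ) (j : Fin d) :
    ∀ L : List (Fin d), j ∈ L → L.Nodup →
      (L.flatMap (fun i => List.replicate (α i) i)).count j = α j := by
  intro L
  induction L with
  | nil => intro h; simp at h
  | cons i L ih =>
      intro hmem hnd
      rw [List.flatMap_cons, List.count_append, List.count_replicate]
      rcases List.mem_cons.mp hmem with h | h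
      · subst h
        have hnotin : j ∉ L := (List.nodup_cons.mp hnd).1
        have hz : (L.flatMap (fun i => List.replicate (α i) i)).count j = 0 := by
          rw [List.count_eq_zero]
          intro hc
          rcases List.mem_flatMap.mp hc with ⟨m, hm, hj⟩
          rcases List.eq_of_mem_replicate hj with rfl
          exact hnotin hm
        simp [hz]
      · have hne : i ≠ j := by
          rintro rfl; exact (List.nodup_cons.mp hnd).1 h
        rw [ih h (List.nodup_cons.mp hnd).2]
        simp [hne]

lemma count_canonList (α : Fin d → ℕ) (j : Fin d) :
    (canonList α).count j = α j :=
  count_canonList_aux α j _ (List.mem_finRange j) (List.nodup_finRange d)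

lemma pdCoord_contDiff {f : (Fin d → ℝ) → ℂ} (hf : ContDiff ℝ ((⊤:ℕ∞) : WithTop ℕ∞) f)
    (i : Fin d) : ContDiff ℝ ((⊤:ℕ∞) : WithTop ℕ∞) (pdCoord i f) :=
  (hf.fderiv_right (by simp)).clm_apply contDiff_const

lemma chainD_contDiff {f : (Fin d → ℝ) → ℂ} (hf : ContDiff ℝ ((⊤:ℕ∞) : WithTop ℕ∞) f)
    (l : List (Fin d)) : ContDiff ℝ ((⊤:ℕ∞) : WithTop ℕ∞) (chainD l f) := by
  induction l with
  | nil => exact hf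
  | cons i l ih => exact pdCoord_contDiff ih i

lemma pdCoord_comm {f : (Fin d → ℝ) → ℂ} (hf : ContDiff ℝ ((⊤:ℕ∞) : WithTop ℕ∞) f)
    (i j : Fin d) : pdCoord i (pdCoord j f) = pdCoord j (pdCoord i f) := by
  funext x
  have hdf : Differentiable ℝ (fderiv ℝ f) :=
    (hf.fderiv_right (m := (⊤:ℕ∞)) (by simp)).differentiable (by simp)
  have key : ∀ u v : Fin d, pdCoord u (pdCoord v f) x
      = fderiv ℝ (fderiv ℝ f) x (Pi.single u 1) (Pi.single v 1) := by
    intro u v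
    have h1 : HasFDerivAt (fderiv ℝ f) (fderiv ℝ (fderiv ℝ f) x) x :=
      (hdf x).hasFDerivAt
    have h2 : HasFDerivAt (fun y => fderiv ℝ f y (Pi.single v 1))
        (((fderiv ℝ f x).comp (0 : (Fin d → ℝ) →L[ℝ] (Fin d → ℝ)))
          + (fderiv ℝ (fderiv ℝ f) x).flip (Pi.single v 1)) x :=
      h1.clm_apply (hasFDerivAt_const _ _)
    have h3 : pdCoord u (pdCoord v f) x
        = (((fderiv ℝ f x).comp (0 : (Fin d → ℝ) →L[ℝ] (Fin d → ℝ)))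
          + (fderiv ℝ (fderiv ℝ f) x).flip (Pi.single v 1))
            (Pi.single u 1) := by
      show fderiv ℝ (fun y => fderiv ℝ f y (Pi.single v 1)) x (Pi.single u 1) = _
      rw [h2.fderiv]
    simpa using h3
  rw [key i j, key j i]
  have hsym : IsSymmSndFDerivAt ℝ f x :=
    (hf.contDiffAt).isSymmSndFDerivAt (by rw [minSmoothness_of_isRCLikeNormedField, show (2 : WithTop ℕ∞) = ((2:ℕ∞):WithTop ℕ∞) from rfl]; exact WithTop.coe_le_coe.mpr le_top)
  exact hsym _ _

lemma chainD_perm {f : (Fin d → ℝ) → ℂ} (hf : ContDiff ℝ ((⊤:ℕ∞) : WithTop ℕ∞) f)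
    {l l' : List (Fin d)} (h : l.Perm l') : chainD l f = chainD l' f := by
  induction h with
  | nil => rfl
  | cons i _ ih => rw [chainD_cons, chainD_cons, ih]
  | swap i j l =>
      rw [chainD_cons, chainD_cons, chainD_cons, chainD_cons]
      exact pdCoord_comm (chainD_contDiff hf l) j i
  | trans _ _ ih1 ih2 => rw [ih1, ih2]

lemma chainD_eq_pdMulti {f : (Fin d → ℝ) → ℂ} (hf : ContDiff ℝ ((⊤:ℕ∞) : WithTop ℕ∞) f)
    (l : List (Fin d)) : chainD l f = pdMulti (fun i => l.count i) f := by
  rw [pdMulti_eq_chainD]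
  refine chainD_perm hf ?_
  rw [List.perm_iff_count]
  intro j
  rw [count_canonList]

lemma abs_zpow' (x : ℝ) (k : ℤ) : |x ^ k| = |x| ^ k := by
  rcases k with n | n
  · simp [abs_pow]
  · simp [zpow_negSucc, abs_pow, abs_inv]

variable [NeZero d]

/-- the basic multiplier-times-function shape -/
def EE (a b : ℂ) (k : ℤ) (f : (Fin d → ℝ) → ℂ) : (Fin d → ℝ) → ℂ :=
  fun x => (if 0 < x 0 then a else if x 0 < 0 then b else 0) * (((x 0) ^ k : ℝ) : ℂ) * f x

def Good (f : (Fin d → ℝ) → ℂ) : Prop :=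
  ContDiff ℝ ((⊤:ℕ∞) : WithTop ℕ∞) f ∧
    ∀ (k : ℤ) (β : Fin d → ℕ) (l : List (Fin d)), ∃ C : ℝ, ∀ x : Fin d → ℝ, x 0 ≠ 0 →
      |x 0| ^ k * |∏ j ∈ Finset.univ.erase (0 : Fin d), (x j) ^ (β j)| * ‖chainD l f x‖ ≤ C

lemma Good.pd {f : (Fin d → ℝ) → ℂ} (hf : Good f) (i : Fin d) : Good (pdCoord i f) := by
  refine ⟨pdCoord_contDiff hf.1 i, fun k β l => ?_⟩
  obtain ⟨C, hC⟩ := hf.2 k β (l ++ [i])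
  exact ⟨C, by simpa [chainD_append, chainD] using hC⟩

lemma Good.chain {f : (Fin d → ℝ) → ℂ} (hf : Good f) (l : List (Fin d)) :
    Good (chainD l f) := by
  induction l with
  | nil => exact hf
  | cons i l ih => exact ih.pd i

lemma EE_zero {a b : ℂ} {k : ℤ} {f : (Fin d → ℝ) → ℂ} {x : Fin d → ℝ} (hx : x 0 = 0) :
    EE a b k f x = 0 := by
  simp [EE, hx]

lemma EE_norm_le (a b : ℂ) (k : ℤ) (f : (Fin d → ℝ) → ℂ) (x : Fin d → ℝ) :
    ‖EE a b k f x‖ ≤ (max ‖a‖ ‖b‖) * (|x 0| ^ k * ‖f x‖) := by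
  have h1 : ‖(if 0 < x 0 then a else if x 0 < 0 then b else 0)‖ ≤ max ‖a‖ ‖b‖ := by
    split_ifs with h1 h2
    · exact le_max_left _ _
    · exact le_max_right _ _
    · simp
  have h2 : ‖(((x 0) ^ k : ℝ) : ℂ)‖ = |x 0| ^ k := by
    rw [Complex.norm_real, Real.norm_eq_abs, abs_zpow']
  calc ‖EE a b k f x‖
      = ‖(if 0 < x 0 then a else if x 0 < 0 then b else 0)‖ * (|x 0| ^ k * ‖f x‖) := by
        rw [EE, norm_mul, norm_mul, h2, mul_assoc]
    _ ≤ (max ‖a‖ ‖b‖) * (|x 0| ^ k * ‖f x‖) := by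
        apply mul_le_mul_of_nonneg_right h1
        positivity

/-- partial derivatives of `EE` -/
def pdE (a b : ℂ) (k : ℤ) (f : (Fin d → ℝ) → ℂ) (i : Fin d) : (Fin d → ℝ) → ℂ :=
  if i = 0 then
    fun x => (k : ℂ) * EE a b (k - 1) f x + EE a b k (pdCoord 0 f) x
  else EE a b k (pdCoord i f)

/-- candidate full derivative of `EE` -/
def ED (a b : ℂ) (k : ℤ) (f : (Fin d → ℝ) → ℂ) (x : Fin d → ℝ) : (Fin d → ℝ) →L[ℝ] ℂ :=
  ∑ i, (ContinuousLinearMap.proj (R := ℝ) (φ := fun _ : Fin d => ℝ) i).smulRight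
    (pdE a b k f i x)

lemma clm_eval_sum (L : (Fin d → ℝ) →L[ℝ] ℂ) (v : Fin d → ℝ) :
    L v = ∑ i, v i • L (Pi.single i 1) := by
  conv_lhs => rw [pi_eq_sum_univ v]
  rw [map_sum]
  refine Finset.sum_congr rfl fun i _ => ?_
  rw [_root_.map_smul]
  congr 1
  congr 1
  funext j
  simp [Pi.single_apply, eq_comm]

lemma ED_apply (a b : ℂ) (k : ℤ) (f : (Fin d → ℝ) → ℂ) (x v : Fin d → ℝ) :
    ED a b k f x v = ∑ i, v i * pdE a b k f i x := by
  simp [ED, ContinuousLinearMap.sum_apply, ContinuousLinearMap.smulRight_apply,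
    ContinuousLinearMap.proj_apply, smul_eq_mul]

lemma EE_hasFDerivAt {f : (Fin d → ℝ) → ℂ} (hf : Good f) (a b : ℂ) (k : ℤ)
    (x : Fin d → ℝ) : HasFDerivAt (EE a b k f) (ED a b k f x) x := by
  have hfd : Differentiable ℝ f :=
    hf.1.differentiable (by simp)
  -- generic construction away from the hyperplane
  have main : ∀ c : ℂ, x 0 ≠ 0 →
      (∀ᶠ y in nhds x, (if 0 < y 0 then a else if y 0 < 0 then b else 0) = c) →
      HasFDerivAt (EE a b k f) (ED a b k f x) x := by
    intro c hx0 hev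
    have hcx : (if 0 < x 0 then a else if x 0 < 0 then b else 0) = c := hev.self_of_nhds
    have hev' : EE a b k f =ᶠ[nhds x] fun y => c * ((((y 0) ^ k : ℝ) : ℂ) * f y) := by
      filter_upwards [hev] with y hy
      rw [EE, hy, mul_assoc]
    have hproj : HasFDerivAt (fun y : Fin d → ℝ => y 0)
        (ContinuousLinearMap.proj (R := ℝ) (φ := fun _ : Fin d => ℝ) 0) x :=
      (ContinuousLinearMap.proj (R := ℝ) (φ := fun _ : Fin d => ℝ) 0).hasFDerivAt
    have hz : HasDerivAt (fun t : ℝ => t ^ k) ((k : ℝ) * (x 0) ^ (k - 1)) (x 0) := by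
      exact_mod_cast hasDerivAt_zpow k (x 0) (Or.inl hx0)
    have hzf : HasFDerivAt (fun y : Fin d → ℝ => (y 0) ^ k)
        (((k : ℝ) * (x 0) ^ (k - 1)) •
          ContinuousLinearMap.proj (R := ℝ) (φ := fun _ : Fin d => ℝ) 0) x :=
      by have := hz.comp_hasFDerivAt x hproj; exact this
    have hcast : HasFDerivAt (fun y : Fin d → ℝ => (((y 0) ^ k : ℝ) : ℂ))
        (Complex.ofRealCLM.comp (((k : ℝ) * (x 0) ^ (k - 1)) •
          ContinuousLinearMap.proj (R := ℝ) (φ := fun _ : Fin d => ℝ) 0)) x :=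
      Complex.ofRealCLM.hasFDerivAt.comp x hzf
    have hmul := hcast.mul (hfd x).hasFDerivAt
    have hfin := hmul.const_mul c
    have hED : ED a b k f x =
        c • ((((x 0) ^ k : ℝ) : ℂ) • fderiv ℝ f x +
          f x • (Complex.ofRealCLM.comp (((k : ℝ) * (x 0) ^ (k - 1)) •
            ContinuousLinearMap.proj (R := ℝ) (φ := fun _ : Fin d => ℝ) 0))) := by
      ext v
      rw [ED_apply]
      have hpdE : ∀ i : Fin d, pdE a b k f i x =
          c * (((x 0) ^ k : ℝ) : ℂ) * pdCoord i f x +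
            (if i = (0 : Fin d) then (k : ℂ) * (c * (((x 0) ^ (k - 1) : ℝ) : ℂ) * f x)
              else 0) := by
        intro i
        have hEEc : ∀ (k' : ℤ) (g : (Fin d → ℝ) → ℂ),
            EE a b k' g x = c * (((x 0) ^ k' : ℝ) : ℂ) * g x := by
          intro k' g; rw [EE, hcx]
        by_cases hi : i = (0 : Fin d)
        · subst hi
          simp only [pdE, eq_self_iff_true, if_true, hEEc]
          ring
        · simp only [pdE, if_neg hi, hEEc]
          ring
      have hsum : ∀ S : Fin d → ℂ, ∑ i, v i * (c * (((x 0) ^ k : ℝ) : ℂ) * S i)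
          = c * (((x 0) ^ k : ℝ) : ℂ) * ∑ i, v i * S i := by
        intro S
        rw [Finset.mul_sum]
        exact Finset.sum_congr rfl fun i _ => by ring
      have hfv : fderiv ℝ f x v = ∑ i, v i * pdCoord i f x := by
        rw [clm_eval_sum (fderiv ℝ f x) v]
        exact Finset.sum_congr rfl fun i _ => by rw [Complex.real_smul]; rfl
      simp only [hpdE, mul_add, Finset.sum_add_distrib, mul_ite, mul_zero,
        Finset.sum_ite_eq', Finset.mem_univ, if_true, hsum]
      simp only [ContinuousLinearMap.smul_apply, ContinuousLinearMap.add_apply,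
        ContinuousLinearMap.comp_apply, ContinuousLinearMap.smul_apply,
        ContinuousLinearMap.proj_apply, Complex.ofRealCLM_apply, smul_eq_mul, hfv]
      push_cast
      ring
    rw [hED]
    exact hfin.congr_of_eventuallyEq hev'
  rcases lt_trichotomy (x 0) 0 with hneg | hzero | hpos
  · refine main b hneg.ne ?_
    have hopen : IsOpen {y : Fin d → ℝ | y 0 < 0} :=
      isOpen_lt (continuous_apply 0) continuous_const
    filter_upwards [hopen.mem_nhds hneg] with y hy
    rw [if_neg (asymm hy), if_pos hy]
  · -- boundary case
    have hED0 : ED a b k f x = 0 := by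
      have hz : ∀ i : Fin d, pdE a b k f i x = 0 := by
        intro i
        unfold pdE
        split <;> simp [EE_zero hzero]
      ext v
      simp [ED_apply, hz]
    rw [hED0]
    obtain ⟨C, hC⟩ := hf.2 (k - 2) 0 []
    have hC' : ∀ y : Fin d → ℝ, y 0 ≠ 0 → |y 0| ^ (k - 2) * ‖f y‖ ≤ C := by
      intro y hy
      have := hC y hy
      simpa [chainD] using this
    set D : ℝ := (max ‖a‖ ‖b‖) * max C 0 with hD
    have hDnn : 0 ≤ D := by positivity
    have hbd : ∀ y : Fin d → ℝ, ‖EE a b k f y‖ ≤ D * (y 0) ^ 2 := by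
      intro y
      by_cases hy : y 0 = 0
      · simp [EE_zero hy, hy]
      · have h1 := EE_norm_le a b k f y
        have habs2 : |y 0| ^ (2:ℤ) = (y 0) ^ 2 := by
          rw [zpow_two, ← sq, sq_abs]
        have h2 : |y 0| ^ k = (y 0) ^ 2 * |y 0| ^ (k - 2) := by
          have hx2 : |y 0| ^ ((2:ℤ) + (k - 2)) = |y 0| ^ (2:ℤ) * |y 0| ^ (k - 2) :=
            zpow_add₀ (abs_ne_zero.mpr hy) 2 (k - 2)
          rw [show (2:ℤ) + (k - 2) = k by ring] at hx2
          rw [hx2, habs2]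
        calc ‖EE a b k f y‖ ≤ (max ‖a‖ ‖b‖) * (|y 0| ^ k * ‖f y‖) := h1
          _ = (max ‖a‖ ‖b‖) * ((y 0) ^ 2 * (|y 0| ^ (k - 2) * ‖f y‖)) := by
              rw [h2]; ring
          _ ≤ (max ‖a‖ ‖b‖) * ((y 0) ^ 2 * max C 0) := by
              apply mul_le_mul_of_nonneg_left _ (by positivity)
              apply mul_le_mul_of_nonneg_left _ (by positivity)
              exact le_trans (hC' y hy) (le_max_left _ _)
          _ = D * (y 0) ^ 2 := by rw [hD]; ring
    rw [hasFDerivAt_iff_isLittleO_nhds_zero]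
    have hsimp : (fun h : Fin d → ℝ => EE a b k f (x + h) - EE a b k f x -
        (0 : (Fin d → ℝ) →L[ℝ] ℂ) h) = fun h => EE a b k f (x + h) := by
      funext h
      simp [EE_zero hzero]
    rw [hsimp]
    rw [Asymptotics.isLittleO_iff]
    intro ε hε
    have hδpos : 0 < ε / (D + 1) := by positivity
    rw [Metric.eventually_nhds_iff]
    refine ⟨ε / (D + 1), hδpos, fun {h} hdist => ?_⟩
    have h1 : |h 0| ≤ ‖h‖ := by
      simpa [Real.norm_eq_abs] using norm_le_pi_norm h 0
    have h2 : ‖EE a b k f (x + h)‖ ≤ D * (h 0) ^ 2 := by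
      have := hbd (x + h)
      simpa [Pi.add_apply, hzero] using this
    have h3 : (h 0) ^ 2 ≤ ‖h‖ * ‖h‖ := by
      have := abs_nonneg (h 0)
      nlinarith [sq_abs (h 0), norm_nonneg h]
    have h4 : ‖h‖ < ε / (D + 1) := by
      simpa [dist_zero_right] using hdist
    have h5 : D * (ε / (D + 1)) ≤ ε := by
      rw [mul_div_assoc']
      rw [div_le_iff₀ (by positivity)]
      nlinarith
    calc ‖EE a b k f (x + h)‖ ≤ D * (h 0) ^ 2 := h2
      _ ≤ D * (‖h‖ * ‖h‖) := by
          exact mul_le_mul_of_nonneg_left h3 hDnn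
      _ = (D * ‖h‖) * ‖h‖ := by ring
      _ ≤ (D * (ε / (D + 1))) * ‖h‖ := by
          apply mul_le_mul_of_nonneg_right _ (norm_nonneg h)
          exact mul_le_mul_of_nonneg_left h4.le hDnn
      _ ≤ ε * ‖h‖ := mul_le_mul_of_nonneg_right h5 (norm_nonneg h)
  · refine main a hpos.ne' ?_
    have hopen : IsOpen {y : Fin d → ℝ | 0 < y 0} :=
      isOpen_lt continuous_const (continuous_apply 0)
    filter_upwards [hopen.mem_nhds hpos] with y hy
    rw [if_pos hy]

lemma EE_differentiable {f : (Fin d → ℝ) → ℂ} (hf : Good f) (a b : ℂ) (k : ℤ) :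
    Differentiable ℝ (EE a b k f) :=
  fun x => (EE_hasFDerivAt hf a b k x).differentiableAt

lemma EE_fderiv {f : (Fin d → ℝ) → ℂ} (hf : Good f) (a b : ℂ) (k : ℤ) :
    fderiv ℝ (EE a b k f) = fun x => ED a b k f x :=
  funext fun x => (EE_hasFDerivAt hf a b k x).fderiv

lemma pdCoord_EE {f : (Fin d → ℝ) → ℂ} (hf : Good f) (a b : ℂ) (k : ℤ) (i : Fin d) :
    pdCoord i (EE a b k f) = pdE a b k f i := by
  funext x
  show fderiv ℝ (EE a b k f) x (Pi.single i 1) = _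
  rw [EE_fderiv hf a b k, ED_apply]
  rw [Finset.sum_eq_single i]
  · simp [Pi.single_apply]
  · intro j _ hj
    simp [Pi.single_apply, hj, Ne.symm hj]
  · intro h
    exact absurd (Finset.mem_univ i) h

lemma EE_contDiff_nat (N : ℕ) {f : (Fin d → ℝ) → ℂ} (hf : Good f) (a b : ℂ) (k : ℤ) :
    ContDiff ℝ (N : WithTop ℕ∞) (EE a b k f) := by
  induction N generalizing f k with
  | zero =>
      rw [show ((0 : ℕ) : WithTop ℕ∞) = 0 from rfl, contDiff_zero]
      exact (EE_differentiable hf a b k).continuous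
  | succ N ih =>
      rw [show ((N + 1 : ℕ) : WithTop ℕ∞) = (N : WithTop ℕ∞) + 1 by push_cast; rfl]
      rw [contDiff_succ_iff_fderiv]
      refine ⟨EE_differentiable hf a b k, ?_, ?_⟩
      · intro h; exact absurd h (by simp)
      · rw [EE_fderiv hf a b k]
        have : (fun x => ED a b k f x) = fun x =>
            ∑ i, (ContinuousLinearMap.smulRightL ℝ (Fin d → ℝ) ℂ
              (ContinuousLinearMap.proj (R := ℝ) (φ := fun _ : Fin d => ℝ) i))
              (pdE a b k f i x) := by
          funext x
          rw [ED]
          rfl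
        rw [this]
        apply ContDiff.sum
        intro i _
        apply (ContinuousLinearMap.contDiff _).comp
        -- ContDiff N (pdE a b k f i)
        by_cases hi : i = (0 : Fin d)
        · subst hi
          rw [pdE, if_pos rfl]
          have h1 : ContDiff ℝ (N : WithTop ℕ∞) (EE a b (k - 1) f) := ih hf (k - 1)
          have h2 : ContDiff ℝ (N : WithTop ℕ∞) (EE a b k (pdCoord 0 f)) :=
            ih (hf.pd 0) k
          exact (h1.const_smul ((k : ℂ))).add h2
        · rw [pdE, if_neg hi]
          exact ih (hf.pd i) k

lemma EE_contDiff {f : (Fin d → ℝ) → ℂ} (hf : Good f) (a b : ℂ) (k : ℤ) :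
    ContDiff ℝ ((⊤:ℕ∞) : WithTop ℕ∞) (EE a b k f) := by
  rw [contDiff_infty]
  intro N
  exact EE_contDiff_nat N hf a b k

/-- value of a list of terms `(c, k, l)` as `∑ c · EE a b k (chainD l f)` -/
def tSum (a b : ℂ) (f : (Fin d → ℝ) → ℂ) (T : List (ℂ × ℤ × List (Fin d))) :
    (Fin d → ℝ) → ℂ :=
  fun x => (T.map (fun t => t.1 * EE a b t.2.1 (chainD t.2.2 f) x)).sum

/-- effect of one partial derivative on a term -/
def step (i : Fin d) (t : ℂ × ℤ × List (Fin d)) : List (ℂ × ℤ × List (Fin d)) :=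
  if i = (0 : Fin d) then
    [(t.1 * (t.2.1 : ℂ), t.2.1 - 1, t.2.2), (t.1, t.2.1, (0 : Fin d) :: t.2.2)]
  else [(t.1, t.2.1, i :: t.2.2)]

lemma tSum_differentiable {f : (Fin d → ℝ) → ℂ} (hf : Good f) (a b : ℂ)
    (T : List (ℂ × ℤ × List (Fin d))) : Differentiable ℝ (tSum a b f T) := by
  induction T with
  | nil =>
      have : tSum a b f [] = fun _ => 0 := by funext x; simp [tSum]
      rw [this]; exact differentiable_const 0
  | cons t T ih =>
      have : tSum a b f (t :: T) = fun y =>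
          t.1 * EE a b t.2.1 (chainD t.2.2 f) y + tSum a b f T y := by
        funext y; simp [tSum]
      rw [this]
      exact ((EE_differentiable (hf.chain t.2.2) a b t.2.1).const_mul t.1).add ih

lemma pd_tSum {f : (Fin d → ℝ) → ℂ} (hf : Good f) (a b : ℂ) (i : Fin d)
    (T : List (ℂ × ℤ × List (Fin d))) :
    pdCoord i (tSum a b f T) = tSum a b f (T.flatMap (step i)) := by
  induction T with
  | nil =>
      funext x
      have h0 : tSum a b f ([] : List (ℂ × ℤ × List (Fin d))) = fun _ => 0 := by
        funext y; simp [tSum]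
      rw [h0]
      show fderiv ℝ (fun _ => (0:ℂ)) x (Pi.single i 1) = _
      rw [fderiv_fun_const]
      simp [tSum]
  | cons t T ih =>
      funext x
      obtain ⟨c, kt, lt⟩ := t
      have hE : Differentiable ℝ (EE a b kt (chainD lt f)) :=
        EE_differentiable (hf.chain lt) a b kt
      have hdiff1 : DifferentiableAt ℝ (fun y => c * EE a b kt (chainD lt f) y) x :=
        (hE.const_mul c) x
      have hdiff2 : DifferentiableAt ℝ (tSum a b f T) x := tSum_differentiable hf a b T x
      have hsplit : tSum a b f ((c, kt, lt) :: T) = fun y =>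
          c * EE a b kt (chainD lt f) y + tSum a b f T y := by
        funext y; simp [tSum]
      rw [hsplit]
      show fderiv ℝ (fun y => c * EE a b kt (chainD lt f) y + tSum a b f T y) x
          (Pi.single i 1) = _
      rw [fderiv_fun_add hdiff1 hdiff2, ContinuousLinearMap.add_apply,
        fderiv_const_mul (hE x) c, ContinuousLinearMap.smul_apply]
      have h1 : fderiv ℝ (EE a b kt (chainD lt f)) x (Pi.single i 1)
          = pdE a b kt (chainD lt f) i x := congrFun (pdCoord_EE (hf.chain lt) a b kt i) x
      have h2 : fderiv ℝ (tSum a b f T) x (Pi.single i 1)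
          = tSum a b f (T.flatMap (step i)) x := congrFun ih x
      rw [h1, h2, List.flatMap_cons]
      have h3 : tSum a b f (step i (c, kt, lt) ++ T.flatMap (step i)) x
          = tSum a b f (step i (c, kt, lt)) x + tSum a b f (T.flatMap (step i)) x := by
        simp [tSum]
      rw [h3]
      congr 1
      by_cases hi : i = (0 : Fin d)
      · subst hi
        rw [pdE, if_pos rfl]
        show c • ((kt : ℂ) * EE a b (kt - 1) (chainD lt f) x
          + EE a b kt (pdCoord 0 (chainD lt f)) x) = _
        rw [step, if_pos rfl]
        have : pdCoord (0 : Fin d) (chainD lt f) = chainD ((0 : Fin d) :: lt) f := rfl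
        rw [this]
        simp [tSum]
        ring
      · rw [pdE, if_neg hi, step, if_neg hi]
        have : pdCoord i (chainD lt f) = chainD (i :: lt) f := rfl
        rw [this]
        simp [tSum]
lemma tSum_bound {f : (Fin d → ℝ) → ℂ} (hf : Good f) (a b : ℂ) (k' : ℤ) (β : Fin d → ℕ)
    (T : List (ℂ × ℤ × List (Fin d))) :
    ∃ C : ℝ, ∀ x : Fin d → ℝ, x 0 ≠ 0 →
      |x 0| ^ k' * |∏ j ∈ Finset.univ.erase (0 : Fin d), (x j) ^ (β j)| *
        ‖tSum a b f T x‖ ≤ C := by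
  induction T with
  | nil =>
      refine ⟨0, fun x hx => ?_⟩
      simp [tSum]
  | cons t T ih =>
      obtain ⟨C2, hC2⟩ := ih
      obtain ⟨C0, hC0⟩ := hf.2 (k' + t.2.1) β t.2.2
      refine ⟨‖t.1‖ * (max ‖a‖ ‖b‖) * C0 + C2, fun x hx => ?_⟩
      set M : ℝ := |∏ j ∈ Finset.univ.erase (0 : Fin d), (x j) ^ (β j)| with hM
      have hMnn : 0 ≤ M := abs_nonneg _
      have hknn : (0:ℝ) ≤ |x 0| ^ k' := zpow_nonneg (abs_nonneg _) k'
      have hsplit : tSum a b f (t :: T) x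
          = t.1 * EE a b t.2.1 (chainD t.2.2 f) x + tSum a b f T x := by
        simp [tSum]
      rw [hsplit]
      have htri : ‖t.1 * EE a b t.2.1 (chainD t.2.2 f) x + tSum a b f T x‖
          ≤ ‖t.1‖ * ‖EE a b t.2.1 (chainD t.2.2 f) x‖ + ‖tSum a b f T x‖ := by
        refine le_trans (norm_add_le _ _) ?_
        rw [norm_mul]
      have hterm : |x 0| ^ k' * M * (‖t.1‖ * ‖EE a b t.2.1 (chainD t.2.2 f) x‖)
          ≤ ‖t.1‖ * (max ‖a‖ ‖b‖) * C0 := by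
        have hEE := EE_norm_le a b t.2.1 (chainD t.2.2 f) x
        have hzp : |x 0| ^ k' * |x 0| ^ t.2.1 = |x 0| ^ (k' + t.2.1) :=
          (zpow_add₀ (abs_ne_zero.mpr hx) k' t.2.1).symm
        calc |x 0| ^ k' * M * (‖t.1‖ * ‖EE a b t.2.1 (chainD t.2.2 f) x‖)
            = ‖t.1‖ * ((|x 0| ^ k' * M) * ‖EE a b t.2.1 (chainD t.2.2 f) x‖) := by ring
          _ ≤ ‖t.1‖ * ((|x 0| ^ k' * M) *
              ((max ‖a‖ ‖b‖) * (|x 0| ^ t.2.1 * ‖chainD t.2.2 f x‖))) := by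
              apply mul_le_mul_of_nonneg_left _ (norm_nonneg _)
              exact mul_le_mul_of_nonneg_left hEE (by positivity)
          _ = ‖t.1‖ * (max ‖a‖ ‖b‖) *
              ((|x 0| ^ k' * |x 0| ^ t.2.1) * M * ‖chainD t.2.2 f x‖) := by ring
          _ = ‖t.1‖ * (max ‖a‖ ‖b‖) *
              (|x 0| ^ (k' + t.2.1) * M * ‖chainD t.2.2 f x‖) := by rw [hzp]
          _ ≤ ‖t.1‖ * (max ‖a‖ ‖b‖) * C0 := by
              apply mul_le_mul_of_nonneg_left _ (by positivity)
              exact hC0 x hx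
      calc |x 0| ^ k' * M * ‖t.1 * EE a b t.2.1 (chainD t.2.2 f) x + tSum a b f T x‖
          ≤ |x 0| ^ k' * M * (‖t.1‖ * ‖EE a b t.2.1 (chainD t.2.2 f) x‖
              + ‖tSum a b f T x‖) := by
            exact mul_le_mul_of_nonneg_left htri (by positivity)
        _ = |x 0| ^ k' * M * (‖t.1‖ * ‖EE a b t.2.1 (chainD t.2.2 f) x‖)
              + |x 0| ^ k' * M * ‖tSum a b f T x‖ := by ring
        _ ≤ ‖t.1‖ * (max ‖a‖ ‖b‖) * C0 + C2 := add_le_add hterm (hC2 x hx)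

/-- term lists for iterated derivatives of `EE` -/
def repT (k : ℤ) : List (Fin d) → List (ℂ × ℤ × List (Fin d))
  | [] => [(1, k, [])]
  | i :: l => (repT k l).flatMap (step i)

lemma chainD_EE {f : (Fin d → ℝ) → ℂ} (hf : Good f) (a b : ℂ) (k : ℤ)
    (l : List (Fin d)) : chainD l (EE a b k f) = tSum a b f (repT k l) := by
  induction l with
  | nil =>
      funext x
      simp [chainD_nil, tSum, repT, chainD]
  | cons i l ih =>
      rw [chainD_cons, ih, pd_tSum hf a b i]
      rfl

lemma good_of_isSqueezed {f : (Fin d → ℝ) → ℂ} (hf : IsSqueezed f) : Good f := by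
  refine ⟨hf.1, fun k β l => ?_⟩
  obtain ⟨C, hC⟩ := hf.2 k β (fun i => l.count i)
  refine ⟨C, fun x hx => ?_⟩
  rw [chainD_eq_pdMulti hf.1 l]
  exact hC x hx

lemma isSqueezed_EE {f : (Fin d → ℝ) → ℂ} (hf : Good f) (a b : ℂ) (k : ℤ) :
    IsSqueezed (EE a b k f) := by
  refine ⟨EE_contDiff hf a b k, fun k' β α => ?_⟩
  obtain ⟨C, hC⟩ := tSum_bound hf a b k' β (repT k (canonList α))
  refine ⟨C, ?_⟩
  intro x hx
  rw [pdMulti_eq_chainD, chainD_EE hf a b k]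
  exact hC x hx

end St13

/-- The Heaviside functions `Θ(p⁺)` and `Θ(−p⁺)`, and the functions
`|p⁺|^k` for every `k ∈ ℤ` (in particular the non-locally-integrable `1/|p⁺|`),
restricted to `ℝ^{n+1} ∖ {p⁺ = 0}`, are multiplicators in `S_{p⁺}(ℝ^{n+1})`. -/
theorem statement13 (n : ℕ) :
    IsMultiplicator (fun x : Fin (n + 1) → ℝ => if 0 < x 0 then (1 : ℂ) else 0) ∧
    IsMultiplicator (fun x : Fin (n + 1) → ℝ => if x 0 < 0 then (1 : ℂ) else 0) ∧
    ∀ k : ℤ, IsMultiplicator (fun x : Fin (n + 1) → ℝ => ((|x 0| ^ k : ℝ) : ℂ)) := by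
  refine ⟨?_, ?_, ?_⟩
  · intro f hf
    have hg : St13.Good f := St13.good_of_isSqueezed hf
    have he : (fun x : Fin (n + 1) → ℝ => if x 0 = 0 then 0 else
        (if 0 < x 0 then (1 : ℂ) else 0) * f x) = St13.EE 1 0 0 f := by
      funext x
      rcases lt_trichotomy (x 0) 0 with hneg | hzero | hpos
      · simp [St13.EE, hneg.ne, asymm hneg, hneg]
      · simp [St13.EE, hzero]
      · simp [St13.EE, hpos.ne', hpos]
    rw [he]
    exact St13.isSqueezed_EE hg 1 0 0
  · intro f hf
    have hg : St13.Good f := St13.good_of_isSqueezed hf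
    have he : (fun x : Fin (n + 1) → ℝ => if x 0 = 0 then 0 else
        (if x 0 < 0 then (1 : ℂ) else 0) * f x) = St13.EE 0 1 0 f := by
      funext x
      rcases lt_trichotomy (x 0) 0 with hneg | hzero | hpos
      · simp [St13.EE, hneg.ne, asymm hneg, hneg]
      · simp [St13.EE, hzero]
      · simp [St13.EE, hpos.ne', hpos, asymm hpos]
    rw [he]
    exact St13.isSqueezed_EE hg 0 1 0
  · intro k f hf
    have hg : St13.Good f := St13.good_of_isSqueezed hf
    have he : (fun x : Fin (n + 1) → ℝ => if x 0 = 0 then 0 else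
        ((|x 0| ^ k : ℝ) : ℂ) * f x) = St13.EE 1 ((-1 : ℂ) ^ k) k f := by
      funext x
      rcases lt_trichotomy (x 0) 0 with hneg | hzero | hpos
      · have h1 : |x 0| = -x 0 := abs_of_neg hneg
        simp only [if_neg hneg.ne, St13.EE, if_neg (asymm hneg), if_pos hneg, h1]
        push_cast [Complex.ofReal_zpow]
        rw [neg_eq_neg_one_mul, mul_zpow]
      · simp [St13.EE, hzero]
      · simp [St13.EE, hpos, hpos.ne', abs_of_pos hpos]
    rw [he]
    exact St13.isSqueezed_EE hg 1 ((-1 : ℂ) ^ k) k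


end
end
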